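/- arXiv:2507.17556 — 4 statements merged into one kernel-verified Lean document; each statement's English description precedes it below -/
import Mathlib

section
/- Let L_g > 0, x ∈ ℝⁿ, and suppose ‖∇²f_i(x)‖ ≤ L_g for every i ∈ N, where ‖·‖ is the spectral norm. Then for every h ∈ [0,1] and every nonempty H ⊆ N with |H| ≥ ⌈(1−h)·d⌉, one has −λ_min(∇²f(x)) ≤ −λ_min(∇²f_H(x)) + 2 h L_g. -/
open scoped RealInnerProductSpace

/-- The spectral (ℓ²-operator) norm of a real matrix. -/
noncomputable def specNorm {n : ℕ} (A : Matrix (Fin n) (Fin n) ℝ) : ℝ :=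
  ‖Matrix.toEuclideanCLM (𝕜 := ℝ) A‖

/-- The smallest eigenvalue of a (Hermitian) real matrix. -/
noncomputable def lambdaMin {n : ℕ} (A : Matrix (Fin n) (Fin n) ℝ) : ℝ :=
  if h : A.IsHermitian then ⨅ i, h.eigenvalues i else 0

/-- The Hessian matrix of `f` at `x`, given by second directional derivatives. -/
noncomputable def hessian {n : ℕ} (f : EuclideanSpace ℝ (Fin n) → ℝ)
    (x : EuclideanSpace ℝ (Fin n)) : Matrix (Fin n) (Fin n) ℝ :=
  fun i j => iteratedFDeriv ℝ 2 f x ![EuclideanSpace.single i 1, EuclideanSpace.single j 1]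

section Aux

variable {n : ℕ}

lemma toCLM_eigen {A : Matrix (Fin n) (Fin n) ℝ} (hA : A.IsHermitian) (j : Fin n) :
    Matrix.toEuclideanCLM (𝕜 := ℝ) A (hA.eigenvectorBasis j) =
      hA.eigenvalues j • hA.eigenvectorBasis j := by
  have h := hA.mulVec_eigenvectorBasis j
  apply (WithLp.equiv 2 (Fin n → ℝ)).injective
  simp only [WithLp.equiv_apply, Matrix.ofLp_toEuclideanCLM]
  simpa using h

lemma lambdaMin_le_rayleigh {A : Matrix (Fin n) (Fin n) ℝ} (hA : A.IsHermitian)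
    (v : EuclideanSpace ℝ (Fin n)) (hv : ‖v‖ = 1) :
    lambdaMin A ≤ ⟪v, Matrix.toEuclideanCLM (𝕜 := ℝ) A v⟫ := by
  have hvne : v ≠ 0 := by intro h0; rw [h0, norm_zero] at hv; norm_num at hv
  have hne : Nonempty (Fin n) := by
    by_contra hcon
    haveI : IsEmpty (Fin n) := not_nonempty_iff.mp hcon
    exact hvne (Subsingleton.elim v 0)
  set T := Matrix.toEuclideanCLM (𝕜 := ℝ) A with hT
  set b := hA.eigenvectorBasis with hb
  set μ := hA.eigenvalues with hμ
  have hsym : (Matrix.toEuclideanLin A).IsSymmetric :=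
    Matrix.isHermitian_iff_isSymmetric.1 hA
  have hcoe : ∀ w, T w = Matrix.toEuclideanLin A w := fun w => rfl
  have hTb : ∀ i, ⟪b i, T v⟫ = μ i * ⟪b i, v⟫ := by
    intro i
    rw [hcoe v, ← hsym (b i) v, ← hcoe (b i)]
    rw [show T (b i) = μ i • b i from toCLM_eigen hA i, real_inner_smul_left]
  have hsum : ∑ i, ⟪v, b i⟫ * ⟪b i, T v⟫ = ⟪v, T v⟫ := b.sum_inner_mul_inner v (T v)
  have hnorm : ∑ i, ⟪v, b i⟫ * ⟪b i, v⟫ = 1 := by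
    rw [b.sum_inner_mul_inner v v, real_inner_self_eq_norm_sq, hv]; norm_num
  have hmin : ∀ i, lambdaMin A ≤ μ i := by
    intro i
    rw [lambdaMin, dif_pos hA]
    exact ciInf_le (Finite.bddBelow_range _) i
  calc lambdaMin A = ∑ i, lambdaMin A * (⟪v, b i⟫ * ⟪b i, v⟫) := by
        rw [← Finset.mul_sum, hnorm, mul_one]
    _ ≤ ∑ i, μ i * (⟪v, b i⟫ * ⟪b i, v⟫) := by
        apply Finset.sum_le_sum
        intro i _
        have hsq : 0 ≤ ⟪v, b i⟫ * ⟪b i, v⟫ := by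
          rw [real_inner_comm v (b i)]; exact mul_self_nonneg _
        exact mul_le_mul_of_nonneg_right (hmin i) hsq
    _ = ∑ i, ⟪v, b i⟫ * ⟪b i, T v⟫ := by
        refine Finset.sum_congr rfl fun i _ => ?_
        rw [hTb i]; ring
    _ = ⟪v, T v⟫ := hsum

lemma exists_rayleigh_eq (hn : 1 ≤ n) {A : Matrix (Fin n) (Fin n) ℝ} (hA : A.IsHermitian) :
    ∃ v : EuclideanSpace ℝ (Fin n), ‖v‖ = 1 ∧
      ⟪v, Matrix.toEuclideanCLM (𝕜 := ℝ) A v⟫ = lambdaMin A := by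
  haveI : Nonempty (Fin n) := ⟨⟨0, hn⟩⟩
  obtain ⟨i, hi⟩ := exists_eq_ciInf_of_finite (f := hA.eigenvalues)
  refine ⟨hA.eigenvectorBasis i, hA.eigenvectorBasis.orthonormal.1 i, ?_⟩
  rw [toCLM_eigen hA i, real_inner_smul_right, real_inner_self_eq_norm_sq,
    hA.eigenvectorBasis.orthonormal.1 i, lambdaMin, dif_pos hA, ← hi]
  norm_num

lemma lambdaMin_perturb (hn : 1 ≤ n) {A B : Matrix (Fin n) (Fin n) ℝ}
    (hA : A.IsHermitian) (hB : B.IsHermitian) :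
    lambdaMin B - specNorm (A - B) ≤ lambdaMin A := by
  obtain ⟨v, hv1, hv2⟩ := exists_rayleigh_eq hn hA
  have h1 : lambdaMin B ≤ ⟪v, Matrix.toEuclideanCLM (𝕜 := ℝ) B v⟫ :=
    lambdaMin_le_rayleigh hB v hv1
  set TA := Matrix.toEuclideanCLM (𝕜 := ℝ) A with hTA
  set TB := Matrix.toEuclideanCLM (𝕜 := ℝ) B with hTB
  have h2 : |⟪v, (TA - TB) v⟫| ≤ specNorm (A - B) := by
    calc |⟪v, (TA - TB) v⟫| ≤ ‖v‖ * ‖(TA - TB) v‖ := abs_real_inner_le_norm _ _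
      _ ≤ ‖v‖ * (‖TA - TB‖ * ‖v‖) :=
          mul_le_mul_of_nonneg_left ((TA - TB).le_opNorm v) (norm_nonneg v)
      _ = ‖TA - TB‖ := by rw [hv1]; ring
      _ = specNorm (A - B) := by rw [specNorm, map_sub]
  have h3 : ⟪v, TA v⟫ = ⟪v, TB v⟫ + ⟪v, (TA - TB) v⟫ := by
    simp [inner_sub_right]
  have h4 : -(specNorm (A - B)) ≤ ⟪v, (TA - TB) v⟫ := neg_le_of_abs_le h2
  linarith [hv2, h1, h3]

lemma isHermitian_hessian {f : EuclideanSpace ℝ (Fin n) → ℝ} (hf : ContDiff ℝ 2 f)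
    (x : EuclideanSpace ℝ (Fin n)) : (hessian f x).IsHermitian := by
  have hsym : IsSymmSndFDerivAt ℝ f x := hf.contDiffAt.isSymmSndFDerivAt (by simp)
  refine Matrix.ext fun i j => ?_
  simp only [Matrix.conjTranspose_apply, hessian, iteratedFDeriv_two_apply, star_trivial]
  simpa using hsym (EuclideanSpace.single j 1) (EuclideanSpace.single i 1)

lemma hessian_smul_sum {d : ℕ} (c : ℝ) (f : Fin d → EuclideanSpace ℝ (Fin n) → ℝ)
    (s : Finset (Fin d)) (hf : ∀ i, ContDiff ℝ 2 (f i)) (x : EuclideanSpace ℝ (Fin n)) :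
    hessian (fun y => c * ∑ i ∈ s, f i y) x = c • ∑ i ∈ s, hessian (f i) x := by
  have hsum : ContDiff ℝ 2 (fun y => ∑ i ∈ s, f i y) :=
    ContDiff.sum fun i _ => hf i
  funext i j
  show iteratedFDeriv ℝ 2 (fun y => c • ((fun z => ∑ k ∈ s, f k z) y)) x _ = _
  rw [iteratedFDeriv_const_smul_apply' hsum.contDiffAt]
  have h2 : iteratedFDeriv ℝ 2 (fun y => ∑ k ∈ s, f k y) x
      = ∑ k ∈ s, iteratedFDeriv ℝ 2 (f k) x := by
    have := iteratedFDeriv_sum (𝕜 := ℝ) (i := 2) (u := s) (f := f) (fun k _ => hf k)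
    simpa [Finset.sum_apply] using congrFun this x
  rw [h2]
  simp [Matrix.smul_apply, Matrix.sum_apply, hessian, smul_eq_mul]

lemma specNorm_sum_le {d : ℕ} (f : Fin d → EuclideanSpace ℝ (Fin n) → ℝ)
    (x : EuclideanSpace ℝ (Fin n)) (Lg : ℝ)
    (hb : ∀ i, specNorm (hessian (f i) x) ≤ Lg) (s : Finset (Fin d)) :
    specNorm (∑ i ∈ s, hessian (f i) x) ≤ s.card * Lg := by
  rw [specNorm, map_sum]
  calc ‖∑ i ∈ s, Matrix.toEuclideanCLM (𝕜 := ℝ) (hessian (f i) x)‖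
      ≤ ∑ i ∈ s, ‖Matrix.toEuclideanCLM (𝕜 := ℝ) (hessian (f i) x)‖ := norm_sum_le _ _
    _ ≤ ∑ _i ∈ s, Lg := Finset.sum_le_sum fun i _ => hb i
    _ = s.card * Lg := by rw [Finset.sum_const, nsmul_eq_mul]

set_option maxHeartbeats 400000 in
set_option synthInstance.maxHeartbeats 400000 in
lemma specNorm_smul (c : ℝ) (S : Matrix (Fin n) (Fin n) ℝ) :
    specNorm (c • S) = |c| * specNorm S := by
  rw [specNorm, map_smul, norm_smul c (Matrix.toEuclideanCLM (𝕜 := ℝ) S), Real.norm_eq_abs]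
  rfl

lemma specNorm_add_le (S T : Matrix (Fin n) (Fin n) ℝ) :
    specNorm (S + T) ≤ specNorm S + specNorm T := by
  rw [specNorm, map_add]
  exact norm_add_le _ _

end Aux

set_option maxHeartbeats 1000000 in
set_option synthInstance.maxHeartbeats 1000000 in
theorem stmt_3 {n d : ℕ} (hn : 1 ≤ n) [NeZero d]
    (f : Fin d → EuclideanSpace ℝ (Fin n) → ℝ)
    (hf : ∀ i, ContDiff ℝ 2 (f i))
    (Lg : ℝ) (hLg : 0 < Lg)
    (x : EuclideanSpace ℝ (Fin n))
    (hhess : ∀ i, specNorm (hessian (f i) x) ≤ Lg)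
    (h : ℝ) (hh0 : 0 ≤ h) (hh1 : h ≤ 1)
    (H : Finset (Fin d)) (hH : H.Nonempty)
    (hcard : ⌈(1 - h) * (d : ℝ)⌉₊ ≤ H.card) :
    -lambdaMin (hessian (fun y => (d : ℝ)⁻¹ * ∑ i, f i y) x)
      ≤ -lambdaMin (hessian (fun y => ((H.card : ℝ))⁻¹ * ∑ i ∈ H, f i y) x) + 2 * h * Lg := by
  classical
  have hA : hessian (fun y => (d : ℝ)⁻¹ * ∑ i, f i y) x
      = (d : ℝ)⁻¹ • ∑ i, hessian (f i) x :=
    hessian_smul_sum _ f Finset.univ hf x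
  have hB : hessian (fun y => ((H.card : ℝ))⁻¹ * ∑ i ∈ H, f i y) x
      = ((H.card : ℝ))⁻¹ • ∑ i ∈ H, hessian (f i) x :=
    hessian_smul_sum _ f H hf x
  set S : Matrix (Fin n) (Fin n) ℝ := ∑ i ∈ H, hessian (f i) x with hS
  set T : Matrix (Fin n) (Fin n) ℝ := ∑ i ∈ Hᶜ, hessian (f i) x with hT
  set A := (d : ℝ)⁻¹ • ∑ i, hessian (f i) x with hAdef
  set B := ((H.card : ℝ))⁻¹ • S with hBdef
  -- Hermitian facts
  have hHermSum : ∀ s : Finset (Fin d), (∑ i ∈ s, hessian (f i) x).IsHermitian := fun s =>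
    Finset.sum_induction _ Matrix.IsHermitian (fun a b ha hb => ha.add hb)
      Matrix.isHermitian_zero (fun i _ => isHermitian_hessian (hf i) x)
  have hHermSmul : ∀ (c : ℝ) (M : Matrix (Fin n) (Fin n) ℝ),
      M.IsHermitian → (c • M).IsHermitian := by
    intro c M hM
    unfold Matrix.IsHermitian at hM ⊢
    rw [Matrix.conjTranspose_smul, star_trivial, hM]
  have hHermA : A.IsHermitian := hHermSmul _ _ (hHermSum Finset.univ)
  have hHermB : B.IsHermitian := hHermSmul _ _ (hHermSum H)
  -- arithmetic setup
  set m := H.card with hm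
  have hm1 : 1 ≤ m := hH.card_pos
  have hmd : m ≤ d := by
    calc m ≤ Fintype.card (Fin d) := Finset.card_le_univ H
      _ = d := Fintype.card_fin d
  have hD0 : (0:ℝ) < d := by exact_mod_cast Nat.pos_of_ne_zero (NeZero.ne d)
  have hM0 : (0:ℝ) < m := by exact_mod_cast hm1
  have hMD : (m:ℝ) ≤ d := by exact_mod_cast hmd
  have hceil : (1 - h) * (d:ℝ) ≤ m := by
    calc (1 - h) * (d:ℝ) ≤ (⌈(1 - h) * (d:ℝ)⌉₊ : ℝ) := Nat.le_ceil _
      _ ≤ m := by exact_mod_cast hcard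
  have hdm : (d:ℝ) - m ≤ h * d := by nlinarith
  -- norm bound
  have hsplit : A - B = ((d:ℝ)⁻¹ - (m:ℝ)⁻¹) • S + (d:ℝ)⁻¹ • T := by
    have huniv : ∑ i, hessian (f i) x = S + T := (Finset.sum_add_sum_compl H _).symm
    rw [hAdef, hBdef, huniv]
    module
  have hnS : specNorm S ≤ m * Lg := specNorm_sum_le f x Lg hhess H
  have hnT : specNorm T ≤ ((d:ℝ) - m) * Lg := by
    have hle := specNorm_sum_le f x Lg hhess Hᶜ
    have hcompl : (Hᶜ.card : ℝ) = (d:ℝ) - m := by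
      rw [Finset.card_compl, Fintype.card_fin, Nat.cast_sub hmd]
    rwa [hcompl] at hle
  have hSnonneg : 0 ≤ specNorm S := norm_nonneg _
  have hTnonneg : 0 ≤ specNorm T := norm_nonneg _
  have hcoef : (0:ℝ) ≤ (m:ℝ)⁻¹ - (d:ℝ)⁻¹ := by
    have : (d:ℝ)⁻¹ ≤ (m:ℝ)⁻¹ := inv_anti₀ hM0 hMD
    linarith
  have hnormAB : specNorm (A - B) ≤ 2 * h * Lg := by
    rw [hsplit]
    have e1 : specNorm (((d:ℝ)⁻¹ - (m:ℝ)⁻¹) • S + (d:ℝ)⁻¹ • T)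
        ≤ |(d:ℝ)⁻¹ - (m:ℝ)⁻¹| * specNorm S + |(d:ℝ)⁻¹| * specNorm T := by
      refine (specNorm_add_le _ _).trans ?_
      rw [specNorm_smul, specNorm_smul]
    have habs1 : |(d:ℝ)⁻¹ - (m:ℝ)⁻¹| = (m:ℝ)⁻¹ - (d:ℝ)⁻¹ := by
      rw [abs_sub_comm, abs_of_nonneg hcoef]
    have habs2 : |(d:ℝ)⁻¹| = (d:ℝ)⁻¹ := abs_of_nonneg (by positivity)
    rw [habs1, habs2] at e1
    have e2 : ((m:ℝ)⁻¹ - (d:ℝ)⁻¹) * specNorm S ≤ ((m:ℝ)⁻¹ - (d:ℝ)⁻¹) * ((m:ℝ) * Lg) :=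
      mul_le_mul_of_nonneg_left hnS hcoef
    have e3 : (d:ℝ)⁻¹ * specNorm T ≤ (d:ℝ)⁻¹ * (((d:ℝ) - m) * Lg) :=
      mul_le_mul_of_nonneg_left hnT (by positivity)
    have e4 : ((m:ℝ)⁻¹ - (d:ℝ)⁻¹) * ((m:ℝ) * Lg) + (d:ℝ)⁻¹ * (((d:ℝ) - m) * Lg)
        = 2 * (((d:ℝ) - m) / d) * Lg := by
      field_simp
      ring
    have e5 : ((d:ℝ) - m) / d ≤ h := (div_le_iff₀ hD0).mpr hdm
    have e6 : 2 * (((d:ℝ) - m) / d) * Lg ≤ 2 * h * Lg := by nlinarith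
    linarith
  rw [hA, hB]
  have hpert := lambdaMin_perturb hn hHermA hHermB
  linarith
end

section
/- (Termination of the inner sampling loop of Algorithm 1.) Let L_g > 0 and suppose each gradient ∇f_i is L_g-Lipschitz continuous on ℝⁿ and that for each i ∈ N there exists x_i* ∈ ℝⁿ with ∇f_i(x_i*) = 0. Let x ∈ ℝⁿ and D_0 ≥ 0 satisfy max_{i ∈ N} ‖x − x_i*‖ ≤ D_0. Let ε_g > 0, γ > 1, 0 < Δ ≤ Δ_max, and suppose ‖∇f(x)‖ > ε_g. Then for every natural number j with ε_g · γ^j > 10 L_g D_0 and every nonempty G ⊆ N with |G| ≥ ⌈(1 − Δ/(γ^j Δ_max))·d⌉, one has ‖∇f_G(x)‖ > 4ε_g/5. In particular, the test ‖∇f_G(x)‖ > 4ε_g/5 of Step 1.2 is satisfied for every admissible subsample as soon as j > max{log_γ(10 L_g D_0 ε_g^{−1}), 0}. -/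
open scoped RealInnerProductSpace

lemma grad_smul_sum {F : Type*} [NormedAddCommGroup F] [InnerProductSpace ℝ F] [CompleteSpace F]
    {ι : Type*} (s : Finset ι) (f : ι → F → ℝ) (x : F)
    (hf : ∀ i ∈ s, DifferentiableAt ℝ (f i) x) (c : ℝ) :
    gradient (fun y => c * ∑ i ∈ s, f i y) x = c • ∑ i ∈ s, gradient (f i) x := by
  unfold gradient
  rw [fderiv_const_mul (DifferentiableAt.fun_sum hf), fderiv_fun_sum hf, map_smul, map_sum]

set_option maxHeartbeats 1000000 in

theorem stmt_6 {n d : ℕ} (hn : 1 ≤ n) [NeZero d]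
    (f : Fin d → EuclideanSpace ℝ (Fin n) → ℝ)
    (hf : ∀ i, ContDiff ℝ 2 (f i))
    (Lg : ℝ) (hLg : 0 < Lg)
    (hlip : ∀ i, ∀ y z : EuclideanSpace ℝ (Fin n),
      ‖gradient (f i) y - gradient (f i) z‖ ≤ Lg * ‖y - z‖)
    (xstar : Fin d → EuclideanSpace ℝ (Fin n))
    (hstar : ∀ i, gradient (f i) (xstar i) = 0)
    (x : EuclideanSpace ℝ (Fin n)) (D0 : ℝ) (hD0 : 0 ≤ D0)
    (hDx : ∀ i, ‖x - xstar i‖ ≤ D0)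
    (εg γ Δ Δmax : ℝ) (hεg : 0 < εg) (hγ : 1 < γ) (hΔ : 0 < Δ) (hΔmax : Δ ≤ Δmax)
    (hgrad : εg < ‖gradient (fun y => (d : ℝ)⁻¹ * ∑ i, f i y) x‖) :
    ∀ j : ℕ, 10 * Lg * D0 < εg * γ ^ j →
      ∀ G : Finset (Fin d), G.Nonempty →
        ⌈(1 - Δ / (γ ^ j * Δmax)) * (d : ℝ)⌉₊ ≤ G.card →
        4 * εg / 5 < ‖gradient (fun y => ((G.card : ℝ))⁻¹ * ∑ i ∈ G, f i y) x‖ := by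
  intro j hj G hG hcard
  have hdiff : ∀ i, ∀ y, DifferentiableAt ℝ (f i) y := fun i y =>
    ((hf i).differentiable two_ne_zero).differentiableAt
  set g : Fin d → EuclideanSpace ℝ (Fin n) := fun i => gradient (f i) x with hg
  -- each ‖g i‖ ≤ Lg * D0
  have hgb : ∀ i, ‖g i‖ ≤ Lg * D0 := by
    intro i
    have := hlip i x (xstar i)
    rw [hstar i, sub_zero] at this
    exact this.trans (by nlinarith [hDx i])
  have hγj : (0:ℝ) < γ ^ j := pow_pos (lt_trans one_pos hγ) j
  have hγj1 : (1:ℝ) ≤ γ ^ j := one_le_pow₀ hγ.le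
  have hΔmax0 : 0 < Δmax := lt_of_lt_of_le hΔ hΔmax
  have hd0 : 0 < (d:ℝ) := by exact_mod_cast Nat.pos_of_ne_zero (NeZero.ne d)
  have hGc0 : 0 < (G.card : ℝ) := by exact_mod_cast hG.card_pos
  have hGdn : G.card ≤ d := by simpa using Finset.card_le_univ G
  have hGd : (G.card : ℝ) ≤ (d:ℝ) := by exact_mod_cast hGdn
  -- rewrite gradients as sums
  have hgradG : gradient (fun y => ((G.card : ℝ))⁻¹ * ∑ i ∈ G, f i y) x
      = ((G.card : ℝ))⁻¹ • ∑ i ∈ G, g i :=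
    grad_smul_sum G f x (fun i _ => hdiff i x) _
  have hgradN : gradient (fun y => (d : ℝ)⁻¹ * ∑ i, f i y) x
      = ((d : ℝ))⁻¹ • ∑ i, g i :=
    grad_smul_sum Finset.univ f x (fun i _ => hdiff i x) _
  rw [hgradG]
  rw [hgradN] at hgrad
  -- norm of total sum
  have hS : (d:ℝ) * εg < ‖∑ i, g i‖ := by
    rw [norm_smul, Real.norm_eq_abs, abs_inv, abs_of_pos hd0] at hgrad
    calc (d:ℝ) * εg < (d:ℝ) * ((d:ℝ)⁻¹ * ‖∑ i, g i‖) := by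
          exact (mul_lt_mul_iff_right₀ hd0).mpr hgrad
      _ = ‖∑ i, g i‖ := by field_simp
  -- norm of complement sum
  have hcompl : ‖∑ i ∈ Gᶜ, g i‖ ≤ ((d:ℝ) - G.card) * (Lg * D0) := by
    calc ‖∑ i ∈ Gᶜ, g i‖ ≤ ∑ i ∈ Gᶜ, ‖g i‖ := norm_sum_le _ _
      _ ≤ ∑ _i ∈ Gᶜ, (Lg * D0) := Finset.sum_le_sum fun i _ => hgb i
      _ = (Gᶜ.card : ℝ) * (Lg * D0) := by rw [Finset.sum_const, nsmul_eq_mul]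
      _ = ((d:ℝ) - G.card) * (Lg * D0) := by
          rw [Finset.card_compl, Fintype.card_fin, Nat.cast_sub hGdn]
  -- card bound: d - |G| ≤ d / γ^j
  have hcard2 : (d:ℝ) - G.card ≤ (d:ℝ) / γ ^ j := by
    have h1 : (1 - Δ / (γ ^ j * Δmax)) * (d : ℝ) ≤ G.card :=
      le_trans (Nat.le_ceil _) (by exact_mod_cast hcard)
    have h2 : Δ / (γ ^ j * Δmax) ≤ 1 / γ ^ j := by
      rw [div_le_div_iff₀ (by positivity) hγj]
      calc Δ * γ ^ j ≤ Δmax * γ ^ j := by nlinarith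
        _ = 1 * (γ ^ j * Δmax) := by ring
    have h3 : (d:ℝ) * (1/γ^j) = (d:ℝ)/γ^j := by ring
    nlinarith [mul_le_mul_of_nonneg_left h2 hd0.le]
  -- (d - |G|) * Lg*D0 ≤ d * εg / 10
  have hkey : ((d:ℝ) - G.card) * (Lg * D0) ≤ (d:ℝ) * εg / 10 := by
    have hLD : Lg * D0 ≤ εg * γ ^ j / 10 := by linarith
    have hnn : (0:ℝ) ≤ (d:ℝ) - G.card := by linarith
    calc ((d:ℝ) - G.card) * (Lg * D0) ≤ ((d:ℝ) / γ ^ j) * (εg * γ ^ j / 10) := by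
          apply mul_le_mul hcard2 hLD (by positivity) (by positivity)
      _ = (d:ℝ) * εg / 10 := by field_simp
  -- split sum
  have hsplit : ∑ i ∈ G, g i = ∑ i, g i - ∑ i ∈ Gᶜ, g i := by
    rw [eq_sub_iff_add_eq, Finset.sum_add_sum_compl]
  have hSG : (9:ℝ)/10 * ((d:ℝ) * εg) < ‖∑ i ∈ G, g i‖ := by
    rw [hsplit]
    have h := norm_sub_norm_le (∑ i, g i) (∑ i ∈ Gᶜ, g i)
    linarith
  rw [norm_smul, Real.norm_eq_abs, abs_inv, abs_of_pos hGc0,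
    show ((G.card:ℝ))⁻¹ * ‖∑ i ∈ G, g i‖ = ‖∑ i ∈ G, g i‖ / G.card from by ring,
    lt_div_iff₀ hGc0]
  nlinarith [mul_le_mul_of_nonneg_right hGd hεg.le]
end

section
/- (Worst-case iteration complexity of the first-order sub-sampled trust-region method.) Let f : ℝⁿ → ℝ be differentiable with L_g-Lipschitz gradient (L_g > 0), bounded below by f_low ∈ ℝ. Let α ∈ (0,1), ε_g > 0, D_0 ≥ 0, 0 < Δ_0 ≤ Δ_max, and assume Δ_0 ≥ (1−α)ε_g / (5 [1 + 2 D_0/Δ_max] L_g). Let (x_k), (d_k), (g_k) be sequences in ℝⁿ, (Δ_k) positive reals, (B_k) symmetric n×n matrices, and define T(ε_g) := inf{k ∈ ℕ : ‖∇f(x_k)‖ ≤ ε_g}. Assume for every k < T(ε_g): (i) ‖g_k − ∇f(x_k)‖ ≤ 2 L_g D_0 (Δ_k/Δ_max); (ii) ‖g_k‖ > 4ε_g/5; (iii) ‖B_k‖ ≤ L_g; (iv) ‖d_k‖ ≤ Δ_k; (v) with m_k(v) := f(x_k) + ⟨g_k, v⟩ + ½⟨B_k v, v⟩, m_k(0)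 − m_k(d_k) ≥ ½‖g_k‖ min{Δ_k, ‖g_k‖/L_g}; and (vi) setting ρ_k := (f(x_k) − f(x_k + d_k))/(m_k(0) − m_k(d_k)): if ρ_k ≥ α then x_{k+1} = x_k + d_k and Δ_{k+1} = min{2Δ_k, Δ_max}, otherwise x_{k+1} = x_k and Δ_{k+1} = Δ_k/2. Then T(ε_g) is finite and T(ε_g) ≤ (25 [1 + 2 D_0/Δ_max] L_g (f(x_0) − f_low)) / (α(1−α)) · ε_g^{−2} + log₂( 5 [1 + 2 D_0/Δ_max] L_g Δ_0 ε_g^{−1} / (1−α) ) + 1. -/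
open scoped RealInnerProductSpace

lemma descent_lemma {n : ℕ} (f : EuclideanSpace ℝ (Fin n) → ℝ) (Lg : ℝ) (hLg : 0 ≤ Lg)
    (hdiff : Differentiable ℝ f)
    (hlip : ∀ y z : EuclideanSpace ℝ (Fin n),
      ‖gradient f y - gradient f z‖ ≤ Lg * ‖y - z‖)
    (x v : EuclideanSpace ℝ (Fin n)) :
    f (x + v) - f x - ⟪gradient f x, v⟫ ≤ Lg / 2 * ‖v‖ ^ 2 := by
  set φ' : ℝ → ℝ := fun t => ⟪gradient f (x + t • v), v⟫ with hφ'
  have hcontg : Continuous (gradient f) :=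
    (LipschitzWith.of_dist_le_mul (K := ⟨Lg, hLg⟩) (fun y z => by
        rw [dist_eq_norm, dist_eq_norm]; exact hlip y z)).continuous
  have hcont : Continuous φ' := by
    apply Continuous.inner
    · exact hcontg.comp (by continuity)
    · exact continuous_const
  have hderiv : ∀ t ∈ Set.uIcc (0:ℝ) 1, HasDerivAt (fun t => f (x + t • v)) (φ' t) t := by
    intro t _
    have hline : HasDerivAt (fun t : ℝ => x + t • v) v t := by
      simpa using ((hasDerivAt_id t).smul_const v).const_add x
    have hf : HasFDerivAt f ((InnerProductSpace.toDual ℝ _) (gradient f (x + t • v))) (x + t • v) :=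
      (hdiff (x + t • v)).hasGradientAt.hasFDerivAt
    have := hf.comp_hasDerivAt t hline
    simp [hφ'] at this ⊢; exact this
  have hint : ∫ t in (0:ℝ)..1, φ' t = f (x + v) - f x := by
    have := intervalIntegral.integral_eq_sub_of_hasDerivAt hderiv
      (hcont.intervalIntegrable 0 1)
    simpa using this
  have hbound : ∀ t ∈ Set.Icc (0:ℝ) 1, φ' t - ⟪gradient f x, v⟫ ≤ Lg * ‖v‖ ^ 2 * t := by
    intro t ht
    have h1 : φ' t - ⟪gradient f x, v⟫ = ⟪gradient f (x + t • v) - gradient f x, v⟫ := by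
      simp [hφ', inner_sub_left]
    rw [h1]
    calc ⟪gradient f (x + t • v) - gradient f x, v⟫
        ≤ ‖gradient f (x + t • v) - gradient f x‖ * ‖v‖ := real_inner_le_norm _ _
      _ ≤ (Lg * ‖(x + t • v) - x‖) * ‖v‖ := by
          apply mul_le_mul_of_nonneg_right (hlip _ _) (norm_nonneg _)
      _ = Lg * ‖v‖ ^ 2 * t := by
          rw [show (x + t • v) - x = t • v by abel]
          rw [norm_smul, Real.norm_eq_abs, abs_of_nonneg ht.1]
          ring
  have hmono : ∫ t in (0:ℝ)..1, (φ' t - ⟪gradient f x, v⟫) ≤ ∫ t in (0:ℝ)..1, Lg * ‖v‖ ^ 2 * t := by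
    apply intervalIntegral.integral_mono_on (by norm_num)
    · exact ((hcont.sub continuous_const).intervalIntegrable 0 1)
    · exact ((continuous_const.mul continuous_id).intervalIntegrable 0 1)
    · exact hbound
  have h2 : ∫ t in (0:ℝ)..1, (φ' t - ⟪gradient f x, v⟫) = (f (x + v) - f x) - ⟪gradient f x, v⟫ := by
    rw [intervalIntegral.integral_sub (hcont.intervalIntegrable 0 1)
      (intervalIntegrable_const), hint]
    simp
  have h3 : ∫ t in (0:ℝ)..1, Lg * ‖v‖ ^ 2 * t = Lg / 2 * ‖v‖ ^ 2 := by
    rw [intervalIntegral.integral_const_mul]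
    simp [integral_id]
    ring
  linarith [hmono, h2.symm.le, h3]

set_option maxHeartbeats 2000000 in
theorem stmt_11 {n : ℕ} (f : EuclideanSpace ℝ (Fin n) → ℝ)
    (Lg flow : ℝ) (hLg : 0 < Lg)
    (hdiff : Differentiable ℝ f)
    (hlip : ∀ y z : EuclideanSpace ℝ (Fin n),
      ‖gradient f y - gradient f z‖ ≤ Lg * ‖y - z‖)
    (hlow : ∀ y, flow ≤ f y)
    (α εg D0 Δmax : ℝ) (hα0 : 0 < α) (hα1 : α < 1) (hεg : 0 < εg) (hD0 : 0 ≤ D0)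
    (x d g : ℕ → EuclideanSpace ℝ (Fin n)) (Δ : ℕ → ℝ)
    (B : ℕ → Matrix (Fin n) (Fin n) ℝ) (hBsymm : ∀ k, (B k).IsHermitian)
    (hΔpos : ∀ k, 0 < Δ k) (hΔ0max : Δ 0 ≤ Δmax)
    (hA5 : Δ 0 ≥ (1 - α) * εg / (5 * (1 + 2 * (D0 / Δmax)) * Lg))
    (m : ℕ → EuclideanSpace ℝ (Fin n) → ℝ)
    (hm : ∀ k v, m k v = f (x k) + ⟪g k, v⟫
      + (1 / 2) * ⟪(Matrix.toEuclideanCLM (𝕜 := ℝ) (B k)) v, v⟫)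
    (hyp : ∀ k, (∀ j ≤ k, εg < ‖gradient f (x j)‖) →
      (‖g k - gradient f (x k)‖ ≤ 2 * Lg * D0 * (Δ k / Δmax)) ∧
      (4 * εg / 5 < ‖g k‖) ∧
      (specNorm (B k) ≤ Lg) ∧
      (‖d k‖ ≤ Δ k) ∧
      (m k 0 - m k (d k) ≥ 1 / 2 * ‖g k‖ * min (Δ k) (‖g k‖ / Lg)) ∧
      ((α ≤ (f (x k) - f (x k + d k)) / (m k 0 - m k (d k)) →
          x (k + 1) = x k + d k ∧ Δ (k + 1) = min (2 * Δ k) Δmax) ∧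
        ((f (x k) - f (x k + d k)) / (m k 0 - m k (d k)) < α →
          x (k + 1) = x k ∧ Δ (k + 1) = Δ k / 2))) :
    {k : ℕ | ‖gradient f (x k)‖ ≤ εg}.Nonempty ∧
    ((sInf {k : ℕ | ‖gradient f (x k)‖ ≤ εg} : ℕ) : ℝ) ≤
      25 * (1 + 2 * (D0 / Δmax)) * Lg * (f (x 0) - flow) / (α * (1 - α)) / εg ^ 2 +
      Real.logb 2 (5 * (1 + 2 * (D0 / Δmax)) * Lg * Δ 0 / ((1 - α) * εg)) + 1 := by
  classical
  have hΔm : 0 < Δmax := lt_of_lt_of_le (hΔpos 0) hΔ0max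
  obtain ⟨κ, hκ⟩ : ∃ y : ℝ, y = 1 + 2 * (D0 / Δmax) := ⟨_, rfl⟩
  rw [show (5 * (1 + 2 * (D0 / Δmax)) * Lg) = 5 * κ * Lg by rw [hκ]] at hA5
  have hκ1 : 1 ≤ κ := by
    have : 0 ≤ D0 / Δmax := div_nonneg hD0 hΔm.le
    rw [hκ]; linarith
  have hκ0 : 0 < κ := lt_of_lt_of_le one_pos hκ1
  have h1α : 0 < 1 - α := by linarith
  obtain ⟨Δb, hΔb⟩ : ∃ y : ℝ, y = (1 - α) * εg / (5 * κ * Lg) := ⟨_, rfl⟩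
  have h5κL : 0 < 5 * κ * Lg := by nlinarith [mul_pos hκ0 hLg]
  have hΔb0 : 0 < Δb := by
    rw [hΔb]; exact div_pos (by nlinarith) h5κL
  have hΔbΔ0 : Δb ≤ Δ 0 := by rw [hΔb]; exact hA5
  have hΔbε : Δb ≤ 4 * εg / (5 * Lg) := by
    rw [hΔb, div_le_div_iff₀ h5κL (by positivity)]
    have h1 : (1 - α) ≤ 4 * κ := by nlinarith
    nlinarith [mul_pos hεg hLg]
  have hΔb2 : 2 * Δb ≤ 4 * εg / (5 * Lg) := by
    rw [hΔb, show (4:ℝ) * εg / (5 * Lg) = 2 * (2 * εg / (5 * Lg)) by ring]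
    have h : (1 - α) * εg / (5 * κ * Lg) ≤ 2 * εg / (5 * Lg) := by
      rw [div_le_div_iff₀ h5κL (by positivity)]
      have h1 : (1 - α) ≤ 2 * κ := by nlinarith
      nlinarith [mul_pos hεg hLg]
    linarith
  obtain ⟨ρ, hρ⟩ : ∃ y : ℕ → ℝ,
      y = fun k => (f (x k) - f (x k + d k)) / (m k 0 - m k (d k)) := ⟨_, rfl⟩
  have hρk : ∀ k, ρ k = (f (x k) - f (x k + d k)) / (m k 0 - m k (d k)) := by
    intro k; rw [hρ]
  obtain ⟨c', hc'⟩ : ∃ y : ℝ, y = α * (2 * εg / 5) * Δb := ⟨_, rfl⟩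
  have hc'0 : 0 < c' := by
    rw [hc']; exact mul_pos (mul_pos hα0 (by positivity)) hΔb0
  -- the main counting lemma
  have key : ∀ N : ℕ, (∀ j, j < N → εg < ‖gradient f (x j)‖) →
      (N : ℝ) ≤ 2 * ((f (x 0) - flow) / c') + Real.logb 2 (Δ 0 / Δb) := by
    intro N hN
    have H : ∀ k, k < N →
      (‖g k - gradient f (x k)‖ ≤ 2 * Lg * D0 * (Δ k / Δmax)) ∧
      (4 * εg / 5 < ‖g k‖) ∧
      (specNorm (B k) ≤ Lg) ∧
      (‖d k‖ ≤ Δ k) ∧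
      (m k 0 - m k (d k) ≥ 1 / 2 * ‖g k‖ * min (Δ k) (‖g k‖ / Lg)) ∧
      ((α ≤ ρ k → x (k + 1) = x k + d k ∧ Δ (k + 1) = min (2 * Δ k) Δmax) ∧
        (ρ k < α → x (k + 1) = x k ∧ Δ (k + 1) = Δ k / 2)) := by
      intro k hk
      have h := hyp k (fun j hj => hN j (lt_of_le_of_lt hj hk))
      rwa [← hρk k] at h
    have hm0 : ∀ k, m k 0 = f (x k) := by
      intro k
      simp [hm k 0]
    -- lower bound on the model decrease
    have denom_lb : ∀ k, k < N →
        2 * εg / 5 * min (Δ k) (4 * εg / (5 * Lg)) ≤ m k 0 - m k (d k) := by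
      intro k hk
      obtain ⟨_, hg, _, _, hcauchy, _⟩ := H k hk
      refine le_trans ?_ hcauchy
      have h1 : 2 * εg / 5 ≤ 1 / 2 * ‖g k‖ := by linarith
      have h2 : min (Δ k) (4 * εg / (5 * Lg)) ≤ min (Δ k) (‖g k‖ / Lg) := by
        apply min_le_min le_rfl
        rw [div_le_div_iff₀ (by positivity) hLg]
        nlinarith
      exact mul_le_mul h1 h2 (le_min (hΔpos k).le (by positivity)) (by positivity)
    have denom_pos : ∀ k, k < N → 0 < m k 0 - m k (d k) := by
      intro k hk
      refine lt_of_lt_of_le ?_ (denom_lb k hk)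
      have : 0 < min (Δ k) (4 * εg / (5 * Lg)) := lt_min (hΔpos k) (by positivity)
      positivity
    -- numerator bound
    have num_ub : ∀ k, k < N → f (x k + d k) - m k (d k) ≤ κ * Lg * Δ k ^ 2 := by
      intro k hk
      obtain ⟨herr, hg, hB, hd, _, _⟩ := H k hk
      have hdesc := descent_lemma f Lg hLg.le hdiff hlip (x k) (d k)
      have hinner : ⟪gradient f (x k) - g k, d k⟫ ≤ 2 * Lg * D0 * (Δ k / Δmax) * Δ k := by
        calc ⟪gradient f (x k) - g k, d k⟫ ≤ ‖gradient f (x k) - g k‖ * ‖d k‖ :=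
              real_inner_le_norm _ _
          _ ≤ 2 * Lg * D0 * (Δ k / Δmax) * Δ k := by
              rw [norm_sub_rev]
              exact mul_le_mul herr hd (norm_nonneg _)
                (mul_nonneg (mul_nonneg (mul_nonneg (by norm_num) hLg.le) hD0)
                  (div_nonneg (hΔpos k).le hΔm.le))
      have hBq : -(Lg * Δ k ^ 2) ≤ ⟪(Matrix.toEuclideanCLM (𝕜 := ℝ) (B k)) (d k), d k⟫ := by
        have habs : |⟪(Matrix.toEuclideanCLM (𝕜 := ℝ) (B k)) (d k), d k⟫| ≤
            specNorm (B k) * ‖d k‖ * ‖d k‖ := by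
          calc |⟪(Matrix.toEuclideanCLM (𝕜 := ℝ) (B k)) (d k), d k⟫|
              ≤ ‖(Matrix.toEuclideanCLM (𝕜 := ℝ) (B k)) (d k)‖ * ‖d k‖ := abs_real_inner_le_norm _ _
            _ ≤ specNorm (B k) * ‖d k‖ * ‖d k‖ :=
                mul_le_mul_of_nonneg_right (ContinuousLinearMap.le_opNorm _ _) (norm_nonneg _)
        have h1 : specNorm (B k) * ‖d k‖ * ‖d k‖ ≤ Lg * Δ k ^ 2 := by
          have hd2 : ‖d k‖ * ‖d k‖ ≤ Δ k ^ 2 := by nlinarith [norm_nonneg (d k)]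
          have hs0 : 0 ≤ specNorm (B k) := norm_nonneg _
          nlinarith [hΔpos k, norm_nonneg (d k)]
        have := abs_le.mp habs
        linarith
      have hdk2 : ‖d k‖ ^ 2 ≤ Δ k ^ 2 := by nlinarith [norm_nonneg (d k)]
      have hmd : m k (d k) = f (x k) + ⟪g k, d k⟫
          + (1 / 2) * ⟪(Matrix.toEuclideanCLM (𝕜 := ℝ) (B k)) (d k), d k⟫ := hm k (d k)
      have hsplit : ⟪gradient f (x k), d k⟫ - ⟪g k, d k⟫ = ⟪gradient f (x k) - g k, d k⟫ := by
        rw [inner_sub_left]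
      have hκLg : κ * Lg * Δ k ^ 2 = Lg * Δ k ^ 2 + 2 * Lg * D0 * (Δ k / Δmax) * Δ k := by
        rw [hκ]
        field_simp
      have e1 : Lg / 2 * ‖d k‖ ^ 2 ≤ Lg / 2 * Δ k ^ 2 := by nlinarith
      have expand : f (x k + d k) - m k (d k) =
          (f (x k + d k) - f (x k) - ⟪gradient f (x k), d k⟫)
          + ⟪gradient f (x k) - g k, d k⟫
          - 1 / 2 * ⟪(Matrix.toEuclideanCLM (𝕜 := ℝ) (B k)) (d k), d k⟫ := by
        rw [hmd, ← hsplit]; ring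
      rw [expand, hκLg]
      linarith [hdesc, hinner, hBq, e1]
    -- success criterion
    have succ_small : ∀ k, k < N → Δ k ≤ 2 * Δb → α ≤ ρ k := by
      intro k hk hsmall
      have hdp := denom_pos k hk
      have hdl := denom_lb k hk
      have hnu := num_ub k hk
      have hminΔ : min (Δ k) (4 * εg / (5 * Lg)) = Δ k :=
        min_eq_left (le_trans hsmall hΔb2)
      rw [hminΔ] at hdl
      rw [hρk k, le_div_iff₀ hdp]
      have hkey : κ * Lg * Δ k ^ 2 ≤ (1 - α) * (2 * εg / 5 * Δ k) := by
        have h2b : κ * Lg * Δ k ≤ (1 - α) * (2 * εg / 5) := by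
          have heq : κ * Lg * (2 * Δb) = (1 - α) * (2 * εg / 5) := by
            rw [hΔb]; field_simp
          nlinarith [mul_pos hκ0 hLg, hsmall]
        nlinarith [hΔpos k, mul_pos hκ0 hLg]
      have hE : (1 - α) * (m k 0 - m k (d k)) ≥ f (x k + d k) - m k (d k) := by
        have h5 : (1 - α) * (2 * εg / 5 * Δ k) ≤ (1 - α) * (m k 0 - m k (d k)) :=
          mul_le_mul_of_nonneg_left hdl h1α.le
        linarith
      have hfid : f (x k) - f (x k + d k) =
          (m k 0 - m k (d k)) - (f (x k + d k) - m k (d k)) := by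
        rw [hm0 k]; ring
      rw [hfid]
      nlinarith
    -- Δ lower bound
    have Δlb : ∀ k, k ≤ N → Δb ≤ Δ k := by
      intro k
      induction k with
      | zero => intro _; exact hΔbΔ0
      | succ k ih =>
        intro hk1
        have hk : k < N := hk1
        have ihk := ih (le_of_lt hk)
        obtain ⟨_, _, _, _, _, hstep⟩ := H k hk
        by_cases hs : α ≤ ρ k
        · rw [(hstep.1 hs).2]
          exact le_min (by linarith) (le_trans hΔbΔ0 hΔ0max)
        · push_neg at hs
          rw [(hstep.2 hs).2]
          have : ¬ (Δ k ≤ 2 * Δb) := fun hc => absurd (succ_small k hk hc) (not_le.mpr hs)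
          push_neg at this
          linarith
    set SC : ℕ → ℕ := fun M => ((Finset.range M).filter (fun k => α ≤ ρ k)).card with hSC
    set FC : ℕ → ℕ := fun M => ((Finset.range M).filter (fun k => ¬ (α ≤ ρ k))).card with hFC
    have hSF : SC N + FC N = N := by
      rw [hSC, hFC]
      simpa using Finset.card_filter_add_card_filter_not
        (s := Finset.range N) (p := fun k => α ≤ ρ k)
    have hSCsucc : ∀ M, α ≤ ρ M → SC (M + 1) = SC M + 1 := by
      intro M hs
      rw [hSC]
      simp only [Finset.range_add_one, Finset.filter_insert, if_pos hs]
      rw [Finset.card_insert_of_notMem (by simp)]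
    have hSCfail : ∀ M, ¬ (α ≤ ρ M) → SC (M + 1) = SC M := by
      intro M hs
      rw [hSC]
      simp only [Finset.range_add_one, Finset.filter_insert, if_neg hs]
    have hFCsucc : ∀ M, α ≤ ρ M → FC (M + 1) = FC M := by
      intro M hs
      rw [hFC]
      simp only [Finset.range_add_one, Finset.filter_insert, if_neg (not_not_intro hs)]
    have hFCfail : ∀ M, ¬ (α ≤ ρ M) → FC (M + 1) = FC M + 1 := by
      intro M hs
      rw [hFC]
      simp only [Finset.range_add_one, Finset.filter_insert, if_pos hs]
      rw [Finset.card_insert_of_notMem (by simp)]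
    -- function value decrease
    have fdec : ∀ M, M ≤ N → (SC M : ℝ) * c' ≤ f (x 0) - f (x M) := by
      intro M
      induction M with
      | zero => intro _; simp [hSC]
      | succ M ih =>
        intro hM1
        have hM : M < N := hM1
        have ihM := ih (le_of_lt hM)
        obtain ⟨_, _, _, _, _, hstep⟩ := H M hM
        by_cases hs : α ≤ ρ M
        · obtain ⟨hx1, _⟩ := hstep.1 hs
          have hdp := denom_pos M hM
          have hdl := denom_lb M hM
          have hdecr : c' ≤ f (x M) - f (x (M + 1)) := by
            rw [hx1]
            have h1 : α * (m M 0 - m M (d M)) ≤ f (x M) - f (x M + d M) := by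
              rw [hρk M] at hs
              have := (le_div_iff₀ hdp).mp hs
              linarith
            have h2 : 2 * εg / 5 * Δb ≤ m M 0 - m M (d M) := by
              refine le_trans ?_ hdl
              have h3 : Δb ≤ min (Δ M) (4 * εg / (5 * Lg)) := le_min (Δlb M (le_of_lt hM)) hΔbε
              nlinarith
            have h3 : c' ≤ α * (m M 0 - m M (d M)) := by
              rw [hc']
              nlinarith
            linarith
          rw [hSCsucc M hs]
          push_cast
          linarith
        · obtain ⟨hx1, _⟩ := hstep.2 (not_le.mp hs)
          rw [hSCfail M hs, hx1]
          linarith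
    -- Δ upper bound
    have Δub : ∀ M, M ≤ N → Δ M ≤ Δ 0 * 2 ^ ((SC M : ℤ) - (FC M : ℤ)) := by
      intro M
      induction M with
      | zero => intro _; simp [hSC, hFC]
      | succ M ih =>
        intro hM1
        have hM : M < N := hM1
        have ihM := ih (le_of_lt hM)
        obtain ⟨_, _, _, _, _, hstep⟩ := H M hM
        by_cases hs : α ≤ ρ M
        · obtain ⟨_, hΔ1⟩ := hstep.1 hs
          rw [hSCsucc M hs, hFCsucc M hs, hΔ1]
          have harith : ((SC M : ℕ) + 1 : ℤ) - (FC M : ℤ) = ((SC M : ℤ) - (FC M : ℤ)) + 1 := by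
            push_cast; ring
          push_cast
          rw [harith, zpow_add₀ (two_ne_zero), zpow_one]
          calc min (2 * Δ M) Δmax ≤ 2 * Δ M := min_le_left _ _
            _ ≤ 2 * (Δ 0 * 2 ^ ((SC M : ℤ) - (FC M : ℤ))) := by linarith
            _ = Δ 0 * (2 ^ ((SC M : ℤ) - (FC M : ℤ)) * 2) := by ring
        · obtain ⟨_, hΔ1⟩ := hstep.2 (not_le.mp hs)
          rw [hSCfail M hs, hFCfail M hs, hΔ1]
          have harith : (SC M : ℤ) - ((FC M : ℕ) + 1 : ℤ) = ((SC M : ℤ) - (FC M : ℤ)) - 1 := by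
            push_cast; ring
          push_cast
          rw [harith, zpow_sub₀ (two_ne_zero), zpow_one,
            show Δ 0 * ((2:ℝ) ^ ((SC M : ℤ) - (FC M : ℤ)) / 2)
              = Δ 0 * 2 ^ ((SC M : ℤ) - (FC M : ℤ)) / 2 by ring]
          linarith
    -- combine
    have hS_le : (SC N : ℝ) ≤ (f (x 0) - flow) / c' := by
      rw [le_div_iff₀ hc'0]
      have h1 := fdec N le_rfl
      have h2 := hlow (x N)
      linarith
    have hF_le : (FC N : ℝ) - (SC N : ℝ) ≤ Real.logb 2 (Δ 0 / Δb) := by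
      have h1 : Δb ≤ Δ 0 * 2 ^ ((SC N : ℤ) - (FC N : ℤ)) :=
        le_trans (Δlb N le_rfl) (Δub N le_rfl)
      have hzpos : (0:ℝ) < 2 ^ ((FC N : ℤ) - (SC N : ℤ)) := by positivity
      have h2 : Δb * 2 ^ ((FC N : ℤ) - (SC N : ℤ)) ≤ Δ 0 := by
        have hz : (2:ℝ) ^ ((SC N : ℤ) - (FC N : ℤ)) * 2 ^ ((FC N : ℤ) - (SC N : ℤ)) = 1 := by
          rw [← zpow_add₀ (two_ne_zero : (2:ℝ) ≠ 0)]
          norm_num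
        calc Δb * 2 ^ ((FC N : ℤ) - (SC N : ℤ))
            ≤ (Δ 0 * 2 ^ ((SC N : ℤ) - (FC N : ℤ))) * 2 ^ ((FC N : ℤ) - (SC N : ℤ)) :=
              mul_le_mul_of_nonneg_right h1 hzpos.le
          _ = Δ 0 := by rw [mul_assoc, hz, mul_one]
      have h3 : Real.logb 2 (Δb * 2 ^ ((FC N : ℤ) - (SC N : ℤ))) ≤ Real.logb 2 (Δ 0) :=
        Real.logb_le_logb_of_le (by norm_num : (1:ℝ) < 2) (mul_pos hΔb0 hzpos) h2
      rw [Real.logb_mul (ne_of_gt hΔb0) (ne_of_gt hzpos)] at h3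
      have h4 : Real.logb 2 ((2:ℝ) ^ ((FC N : ℤ) - (SC N : ℤ))) = ((FC N : ℤ) - (SC N : ℤ) : ℤ) := by
        rw [Real.logb, Real.log_zpow, mul_div_assoc,
          div_self (Real.log_ne_zero_of_pos_of_ne_one two_pos (by norm_num)), mul_one]
      rw [Real.logb_div (ne_of_gt (hΔpos 0)) (ne_of_gt hΔb0)]
      push_cast at h4
      linarith
    have hNSF : (N : ℝ) = (SC N : ℝ) + (FC N : ℝ) := by exact_mod_cast hSF.symm
    rw [hNSF]
    linarith
  -- nonemptiness
  have hne : {k : ℕ | ‖gradient f (x k)‖ ≤ εg}.Nonempty := by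
    by_contra hc
    rw [Set.not_nonempty_iff_eq_empty] at hc
    have hall : ∀ k : ℕ, εg < ‖gradient f (x k)‖ := by
      intro k
      by_contra hk
      push_neg at hk
      have : k ∈ {k : ℕ | ‖gradient f (x k)‖ ≤ εg} := hk
      rw [hc] at this
      exact this
    obtain ⟨N, hN⟩ := exists_nat_gt (2 * ((f (x 0) - flow) / c') + Real.logb 2 (Δ 0 / Δb))
    have := key N (fun j _ => hall j)
    linarith
  refine ⟨hne, ?_⟩
  set T := sInf {k : ℕ | ‖gradient f (x k)‖ ≤ εg} with hT
  have hbefore : ∀ j, j < T → εg < ‖gradient f (x j)‖ := by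
    intro j hj
    have : j ∉ {k : ℕ | ‖gradient f (x k)‖ ≤ εg} := Nat.notMem_of_lt_sInf hj
    exact lt_of_not_ge this
  have hkey := key T hbefore
  have heq1 : 2 * ((f (x 0) - flow) / c') =
      25 * κ * Lg * (f (x 0) - flow) / (α * (1 - α)) / εg ^ 2 := by
    rw [hc', hΔb]
    field_simp
    ring
  have heq2 : Δ 0 / Δb = 5 * κ * Lg * Δ 0 / ((1 - α) * εg) := by
    rw [hΔb]
    field_simp
  rw [heq1, heq2] at hkey
  rw [show (1 + 2 * (D0 / Δmax)) = κ from hκ.symm]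
  linarith
end

section
/- (Worst-case iteration complexity of the second-order sub-sampled trust-region method.) Let f : ℝⁿ → ℝ be twice continuously differentiable with L_g-Lipschitz gradient and L_H-Lipschitz Hessian (L_g, L_H > 0), bounded below by f_low ∈ ℝ. Let α ∈ (0,1), ε_g, ε_H > 0, D_0 ≥ 0, 0 < Δ_0 ≤ Δ_max. Set Δ̄ := min{ 2(1−α)ε_g / (5 [1 + 2 D_0/Δ_max] L_g), 4(1−α)ε_H / (5 [L_H/6 + 2(D_0/Δ_max + 1)(L_g/Δ_max)] ) } and Δ_min := min{Δ_0, Δ̄/2}. Let (x_k), (d_k), (g_k) be sequences in ℝⁿ, (Δ_k) positive reals, (B_k) symmetric n×n matrices, and define T(ε_g, ε_H) := inf{k ∈ ℕ : ‖∇f(x_k)‖ ≤ ε_g and λ_min(∇²f(x_k)) ≥ −ε_H}. Assume for every k < T(ε_g, ε_H): (i) ‖g_k − ∇f(x_k)‖ ≤ 2 L_g D_0 (Δ_k/Δ_max)²; (ii) ‖B_k‖ ≤ L_g; (iii) either ‖g_k‖ > 4ε_g/5, or both −λ_min(B_k) > 4ε_H/5 and ‖B_k − ∇²f(x_k)‖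 ≤ 2 L_g (Δ_k/Δ_max); (iv) ‖d_k‖ ≤ Δ_k; (v) with m_k(v) := f(x_k) + ⟨g_k, v⟩ + ½⟨B_k v, v⟩, m_k(0) − m_k(d_k) ≥ max{ ½‖g_k‖ min{Δ_k, ‖g_k‖/L_g}, −λ_min(B_k) Δ_k² }; and (vi) setting ρ_k := (f(x_k) − f(x_k + d_k))/(m_k(0) − m_k(d_k)): if ρ_k ≥ α then x_{k+1} = x_k + d_k and Δ_{k+1} = min{2Δ_k, Δ_max}, otherwise x_{k+1} = x_k and Δ_{k+1} = Δ_k/2. Then T(ε_g, ε_H) is finite and T(ε_g, ε_H) ≤ (5/α)(f(x_0) − f_low) max{ ε_g^{−1} Δ_min^{−1}, ε_H^{−1} Δ_min^{−2} } + log₂(Δ_max/Δ_min) + 1. -/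
open scoped RealInnerProductSpace

variable {n : ℕ}
local notation "E" => EuclideanSpace ℝ (Fin n)

lemma inner_grad (f : E → ℝ) (y v : E) : ⟪gradient f y, v⟫ = fderiv ℝ f y v := by
  unfold gradient
  exact InnerProductSpace.toDual_symm_apply

lemma inner_CLM_le (A : Matrix (Fin n) (Fin n) ℝ) (v w : E) :
    |⟪(Matrix.toEuclideanCLM (𝕜 := ℝ) A) v, w⟫| ≤ specNorm A * ‖v‖ * ‖w‖ := by
  calc |⟪(Matrix.toEuclideanCLM (𝕜 := ℝ) A) v, w⟫| ≤ ‖(Matrix.toEuclideanCLM (𝕜 := ℝ) A) v‖ * ‖w‖ :=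
        abs_real_inner_le_norm _ _
    _ ≤ specNorm A * ‖v‖ * ‖w‖ := by
        gcongr
        exact ContinuousLinearMap.le_opNorm _ _

lemma euclid_decomp (v : E) : v = ∑ i, v i • EuclideanSpace.single i (1:ℝ) := by
  ext j
  rw [show (∑ i, v i • EuclideanSpace.single i (1:ℝ)) j = ∑ i, (v i • EuclideanSpace.single i (1:ℝ)) j from by
    rw [WithLp.ofLp_sum]; exact Finset.sum_apply j Finset.univ _]
  simp [EuclideanSpace.single_apply, mul_comm]

lemma inner_hessian (f : E → ℝ) (y v w : E) :
    ⟪(Matrix.toEuclideanCLM (𝕜 := ℝ) (hessian f y)) v, w⟫ = fderiv ℝ (fderiv ℝ f) y w v := by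
  have hD : ∀ i j, hessian f y i j
      = fderiv ℝ (fderiv ℝ f) y (EuclideanSpace.single i 1) (EuclideanSpace.single j 1) := by
    intro i j
    rw [show hessian f y i j = iteratedFDeriv ℝ 2 f y ![EuclideanSpace.single i 1, EuclideanSpace.single j 1] from rfl,
      iteratedFDeriv_two_apply]
    rfl
  set D := fderiv ℝ (fderiv ℝ f) y with hDdef
  have expand : D w v = ∑ i, ∑ j, w i * v j * D (EuclideanSpace.single i 1) (EuclideanSpace.single j 1) := by
    conv_lhs => rw [euclid_decomp w, euclid_decomp v]
    simp only [map_sum, map_smul, ContinuousLinearMap.sum_apply, ContinuousLinearMap.smul_apply,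
      ContinuousLinearMap.coe_sum', Finset.sum_apply, smul_eq_mul, Finset.mul_sum]
    rw [Finset.sum_comm]
    exact Finset.sum_congr rfl (fun i _ => Finset.sum_congr rfl (fun j _ => by ring))
  have comp : ∀ i, (Matrix.toEuclideanCLM (𝕜 := ℝ) (hessian f y)) v i
      = ∑ j, hessian f y i j * v j := by
    intro i
    have h3 := congrFun (Matrix.ofLp_toEuclideanCLM (𝕜 := ℝ) (hessian f y) v) i
    rw [h3, Matrix.mulVec, dotProduct]
  rw [expand, PiLp.inner_apply]
  rw [Finset.sum_congr rfl (fun i _ => by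
    rw [comp i, RCLike.inner_apply, starRingEnd_apply, star_trivial, Finset.mul_sum])]
  refine Finset.sum_congr rfl (fun i _ => Finset.sum_congr rfl (fun j _ => ?_))
  rw [hD]
  ring

lemma path_deriv1 (f : E → ℝ) (hf : ContDiff ℝ 2 f) (x d : E) (t : ℝ) :
    HasDerivAt (fun t : ℝ => f (x + t • d)) (fderiv ℝ f (x + t • d) d) t := by
  have hγ : HasDerivAt (fun t : ℝ => x + t • d) d t := by
    simpa using ((hasDerivAt_id t).smul_const d).const_add x
  have hfd : HasFDerivAt f (fderiv ℝ f (x + t • d)) (x + t • d) :=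
    (hf.differentiable two_ne_zero (x + t • d)).hasFDerivAt
  exact hfd.comp_hasDerivAt t hγ

lemma path_deriv2 (f : E → ℝ) (hf : ContDiff ℝ 2 f) (x d : E) (t : ℝ) :
    HasDerivAt (fun t : ℝ => fderiv ℝ f (x + t • d) d)
      (fderiv ℝ (fderiv ℝ f) (x + t • d) d d) t := by
  have hγ : HasDerivAt (fun t : ℝ => x + t • d) d t := by
    simpa using ((hasDerivAt_id t).smul_const d).const_add x
  have h1 : ContDiff ℝ 1 (fderiv ℝ f) := hf.fderiv_right (by norm_num)
  have hfd : HasFDerivAt (fderiv ℝ f) (fderiv ℝ (fderiv ℝ f) (x + t • d)) (x + t • d) :=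
    (h1.differentiable one_ne_zero (x + t • d)).hasFDerivAt
  have h2 : HasFDerivAt (fun z : E => fderiv ℝ f z d)
      ((ContinuousLinearMap.apply ℝ ℝ d).comp (fderiv ℝ (fderiv ℝ f) (x + t • d))) (x + t • d) :=
    (ContinuousLinearMap.apply ℝ ℝ d).hasFDerivAt.comp _ hfd
  exact h2.comp_hasDerivAt t hγ

lemma path_cont1 (f : E → ℝ) (hf : ContDiff ℝ 2 f) (x d : E) :
    Continuous (fun t : ℝ => fderiv ℝ f (x + t • d) d) := by
  have : Continuous (fun t : ℝ => x + t • d) := by continuity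
  exact ((hf.continuous_fderiv two_ne_zero).comp this).clm_apply continuous_const

lemma path_cont2 (f : E → ℝ) (hf : ContDiff ℝ 2 f) (x d : E) :
    Continuous (fun t : ℝ => fderiv ℝ (fderiv ℝ f) (x + t • d) d d) := by
  have hp : Continuous (fun t : ℝ => x + t • d) := by continuity
  have h1 : ContDiff ℝ 1 (fderiv ℝ f) := hf.fderiv_right (by norm_num)
  exact (((h1.continuous_fderiv one_ne_zero).comp hp).clm_apply continuous_const).clm_apply
    continuous_const

lemma taylor1 (f : E → ℝ) (hf : ContDiff ℝ 2 f) (Lg : ℝ)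
    (hlipg : ∀ y z : E, ‖gradient f y - gradient f z‖ ≤ Lg * ‖y - z‖) (x d : E) :
    f (x + d) ≤ f x + ⟪gradient f x, d⟫ + Lg / 2 * ‖d‖ ^ 2 := by
  set q : ℝ → ℝ := fun t => fderiv ℝ f (x + t • d) d with hq
  have hint : ∀ t ∈ Set.uIcc (0:ℝ) 1, HasDerivAt (fun t : ℝ => f (x + t • d)) (q t) t :=
    fun t _ => path_deriv1 f hf x d t
  have hInt : IntervalIntegrable q MeasureTheory.volume 0 1 :=
    (path_cont1 f hf x d).intervalIntegrable 0 1
  have key : f (x + d) - f x = ∫ t in (0:ℝ)..1, q t := by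
    have := intervalIntegral.integral_eq_sub_of_hasDerivAt hint hInt
    simpa using this.symm
  have hmono : (∫ t in (0:ℝ)..1, (q t - q 0)) ≤ ∫ t in (0:ℝ)..1, Lg * ‖d‖ ^ 2 * t := by
    apply intervalIntegral.integral_mono_on (by norm_num)
    · exact (hInt.sub (intervalIntegrable_const))
    · exact ((continuous_const.mul continuous_id).intervalIntegrable 0 1)
    · intro t ht
      have h0 : q t - q 0 = ⟪gradient f (x + t • d) - gradient f x, d⟫ := by
        rw [inner_sub_left, inner_grad, inner_grad, hq]
        simp
      rw [h0]
      calc ⟪gradient f (x + t • d) - gradient f x, d⟫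
          ≤ ‖gradient f (x + t • d) - gradient f x‖ * ‖d‖ := real_inner_le_norm _ _
        _ ≤ (Lg * ‖x + t • d - x‖) * ‖d‖ := by
            exact mul_le_mul_of_nonneg_right (hlipg (x + t • d) x) (norm_nonneg d)
        _ = Lg * ‖d‖ ^ 2 * t := by
            have : ‖x + t • d - x‖ = t * ‖d‖ := by
              rw [add_sub_cancel_left, norm_smul, Real.norm_eq_abs, abs_of_nonneg ht.1]
            rw [this]; ring
  have hval : (∫ t in (0:ℝ)..1, Lg * ‖d‖ ^ 2 * t) = Lg / 2 * ‖d‖ ^ 2 := by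
    rw [intervalIntegral.integral_const_mul, integral_id]
    ring
  have hsub : (∫ t in (0:ℝ)..1, (q t - q 0)) = (∫ t in (0:ℝ)..1, q t) - q 0 := by
    rw [intervalIntegral.integral_sub hInt intervalIntegrable_const]
    simp
  have hq0 : q 0 = ⟪gradient f x, d⟫ := by rw [inner_grad, hq]; simp
  have := hmono
  rw [hsub, hval, ← key, hq0] at this
  linarith

lemma taylor2 (f : E → ℝ) (hf : ContDiff ℝ 2 f) (LH : ℝ)
    (hlipH : ∀ y z : E, specNorm (hessian f y - hessian f z) ≤ LH * ‖y - z‖) (x d : E) :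
    f (x + d) ≤ f x + ⟪gradient f x, d⟫
      + 1 / 2 * ⟪(Matrix.toEuclideanCLM (𝕜 := ℝ) (hessian f x)) d, d⟫ + LH / 6 * ‖d‖ ^ 3 := by
  set q : ℝ → ℝ := fun t => fderiv ℝ f (x + t • d) d with hq
  set r : ℝ → ℝ := fun t => fderiv ℝ (fderiv ℝ f) (x + t • d) d d with hr
  set c : ℝ := r 0 with hc
  set G : ℝ → ℝ := fun t => f (x + t • d) + (1 - t) * q t + (1 - t) ^ 2 / 2 * c with hG
  have hGderiv : ∀ t ∈ Set.uIcc (0:ℝ) 1, HasDerivAt G ((1 - t) * (r t - c)) t := by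
    intro t _
    have h1t : HasDerivAt (fun t : ℝ => 1 - t) (-1) t := (hasDerivAt_id t).const_sub 1
    have prod : HasDerivAt (fun t : ℝ => (1 - t) * q t) (-1 * q t + (1 - t) * r t) t :=
      h1t.mul (path_deriv2 f hf x d t)
    have hsq : HasDerivAt (fun t : ℝ => (1 - t) ^ 2 / 2 * c)
        ((((2:ℕ) * (1 - t) ^ 1 * (-1)) / 2) * c) t := ((h1t.pow 2).div_const 2).mul_const c
    have := ((path_deriv1 f hf x d t).add prod).add hsq
    refine HasDerivAt.congr_deriv this ?_
    simp only [hq, pow_one, Nat.cast_ofNat]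
    ring
  have hcont : Continuous (fun t : ℝ => (1 - t) * (r t - c)) :=
    (continuous_const.sub continuous_id).mul ((path_cont2 f hf x d).sub continuous_const)
  have key : G 1 - G 0 = ∫ t in (0:ℝ)..1, (1 - t) * (r t - c) :=
    (intervalIntegral.integral_eq_sub_of_hasDerivAt hGderiv (hcont.intervalIntegrable 0 1)).symm
  have hmono : (∫ t in (0:ℝ)..1, (1 - t) * (r t - c))
      ≤ ∫ t in (0:ℝ)..1, LH * ‖d‖ ^ 3 * (t - t ^ 2) := by
    apply intervalIntegral.integral_mono_on (by norm_num) (hcont.intervalIntegrable 0 1)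
      ((continuous_const.mul (continuous_id.sub (continuous_pow 2))).intervalIntegrable 0 1)
    intro t ht
    have hrt : r t - c = ⟪(Matrix.toEuclideanCLM (𝕜 := ℝ)
        (hessian f (x + t • d) - hessian f x)) d, d⟫ := by
      rw [map_sub, ContinuousLinearMap.sub_apply, inner_sub_left,
        inner_hessian, inner_hessian, hr, hc]
      simp [hr]
    have hbound : r t - c ≤ LH * t * ‖d‖ ^ 3 := by
      rw [hrt]
      calc ⟪(Matrix.toEuclideanCLM (𝕜 := ℝ) (hessian f (x + t • d) - hessian f x)) d, d⟫
          ≤ |⟪(Matrix.toEuclideanCLM (𝕜 := ℝ) (hessian f (x + t • d) - hessian f x)) d, d⟫| :=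
            le_abs_self _
        _ ≤ specNorm (hessian f (x + t • d) - hessian f x) * ‖d‖ * ‖d‖ := inner_CLM_le _ _ _
        _ ≤ (LH * ‖x + t • d - x‖) * ‖d‖ * ‖d‖ := by
            have h := hlipH (x + t • d) x
            exact mul_le_mul_of_nonneg_right
              (mul_le_mul_of_nonneg_right h (norm_nonneg d)) (norm_nonneg d)
        _ = LH * t * ‖d‖ ^ 3 := by
            rw [add_sub_cancel_left, norm_smul, Real.norm_eq_abs, abs_of_nonneg ht.1]
            ring
    have h1t : 0 ≤ 1 - t := by linarith [ht.2]
    calc (1 - t) * (r t - c) ≤ (1 - t) * (LH * t * ‖d‖ ^ 3) :=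
          mul_le_mul_of_nonneg_left hbound h1t
      _ = LH * ‖d‖ ^ 3 * (t - t ^ 2) := by ring
  have h6 : (∫ t in (0:ℝ)..1, (t - t ^ 2)) = 1 / 6 := by
    rw [intervalIntegral.integral_sub (Continuous.intervalIntegrable (by continuity) 0 1)
        ((continuous_pow 2).intervalIntegrable 0 1),
      integral_id, integral_pow]
    norm_num
  have hval : (∫ t in (0:ℝ)..1, LH * ‖d‖ ^ 3 * (t - t ^ 2)) = LH / 6 * ‖d‖ ^ 3 := by
    rw [intervalIntegral.integral_const_mul, h6]
    ring
  have hG1 : G 1 = f (x + d) := by rw [hG]; simp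
  have hq0 : q 0 = ⟪gradient f x, d⟫ := by rw [inner_grad, hq]; simp
  have hc0 : c = ⟪(Matrix.toEuclideanCLM (𝕜 := ℝ) (hessian f x)) d, d⟫ := by
    rw [inner_hessian, hc, hr]
    simp
  have e0 : G 0 = f x + q 0 + c / 2 := by rw [hG]; norm_num; ring
  rw [hG1, e0] at key
  linarith [hmono, hval.le, key, hq0, hc0]


set_option maxHeartbeats 2000000 in
theorem stmt_17 {n : ℕ} (f : EuclideanSpace ℝ (Fin n) → ℝ)
    (Lg LH flow : ℝ) (hLg : 0 < Lg) (hLH : 0 < LH)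
    (hf : ContDiff ℝ 2 f)
    (hlipg : ∀ y z : EuclideanSpace ℝ (Fin n),
      ‖gradient f y - gradient f z‖ ≤ Lg * ‖y - z‖)
    (hlipH : ∀ y z : EuclideanSpace ℝ (Fin n),
      specNorm (hessian f y - hessian f z) ≤ LH * ‖y - z‖)
    (hlow : ∀ y, flow ≤ f y)
    (α εg εH D0 Δmax : ℝ) (hα0 : 0 < α) (hα1 : α < 1)
    (hεg : 0 < εg) (hεH : 0 < εH) (hD0 : 0 ≤ D0)
    (Δbar Δmin : ℝ)
    (hΔbar : Δbar = min (2 * (1 - α) * εg / (5 * (1 + 2 * (D0 / Δmax)) * Lg))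
      (4 * (1 - α) * εH / (5 * (LH / 6 + 2 * (D0 / Δmax + 1) * (Lg / Δmax)))))
    (x d g : ℕ → EuclideanSpace ℝ (Fin n)) (Δ : ℕ → ℝ)
    (B : ℕ → Matrix (Fin n) (Fin n) ℝ) (hBsymm : ∀ k, (B k).IsHermitian)
    (hΔpos : ∀ k, 0 < Δ k) (hΔ0pos : 0 < Δ 0) (hΔ0max : Δ 0 ≤ Δmax)
    (hΔmin : Δmin = min (Δ 0) (Δbar / 2))
    (m : ℕ → EuclideanSpace ℝ (Fin n) → ℝ)
    (hm : ∀ k v, m k v = f (x k) + ⟪g k, v⟫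
      + (1 / 2) * ⟪(Matrix.toEuclideanCLM (𝕜 := ℝ) (B k)) v, v⟫)
    (hyp : ∀ k, (∀ j ≤ k,
        ¬(‖gradient f (x j)‖ ≤ εg ∧ -εH ≤ lambdaMin (hessian f (x j)))) →
      (‖g k - gradient f (x k)‖ ≤ 2 * Lg * D0 * (Δ k / Δmax) ^ 2) ∧
      (specNorm (B k) ≤ Lg) ∧
      (4 * εg / 5 < ‖g k‖ ∨
        (4 * εH / 5 < -lambdaMin (B k) ∧
          specNorm (B k - hessian f (x k)) ≤ 2 * Lg * (Δ k / Δmax))) ∧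
      (‖d k‖ ≤ Δ k) ∧
      (m k 0 - m k (d k)
        ≥ max (1 / 2 * ‖g k‖ * min (Δ k) (‖g k‖ / Lg)) (-lambdaMin (B k) * Δ k ^ 2)) ∧
      ((α ≤ (f (x k) - f (x k + d k)) / (m k 0 - m k (d k)) →
          x (k + 1) = x k + d k ∧ Δ (k + 1) = min (2 * Δ k) Δmax) ∧
        ((f (x k) - f (x k + d k)) / (m k 0 - m k (d k)) < α →
          x (k + 1) = x k ∧ Δ (k + 1) = Δ k / 2))) :
    {k : ℕ | ‖gradient f (x k)‖ ≤ εg ∧ -εH ≤ lambdaMin (hessian f (x k))}.Nonempty ∧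
    ((sInf {k : ℕ | ‖gradient f (x k)‖ ≤ εg ∧
        -εH ≤ lambdaMin (hessian f (x k))} : ℕ) : ℝ) ≤
      (5 / α) * (f (x 0) - flow) * max (εg⁻¹ * Δmin⁻¹) (εH⁻¹ * (Δmin ^ 2)⁻¹) +
      Real.logb 2 (Δmax / Δmin) + 1 := by
  classical
  have hΔmax : 0 < Δmax := lt_of_lt_of_le hΔ0pos hΔ0max
  have hu0 : 0 ≤ D0 / Δmax := div_nonneg hD0 hΔmax.le
  have h1α : 0 < 1 - α := by linarith only [hα1]
  set C1 : ℝ := 5 * (1 + 2 * (D0 / Δmax)) * Lg with hC1def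
  set C2 : ℝ := 5 * (LH / 6 + 2 * (D0 / Δmax + 1) * (Lg / Δmax)) with hC2def
  have hC1 : 0 < C1 := by
    rw [hC1def]
    have h : (0:ℝ) < 1 + 2 * (D0 / Δmax) := by linarith only [hu0]
    exact mul_pos (mul_pos (by norm_num) h) hLg
  have hC2 : 0 < C2 := by
    rw [hC2def]
    have h2 : 0 < Lg / Δmax := div_pos hLg hΔmax
    have h3 : (0:ℝ) < D0 / Δmax + 1 := by linarith only [hu0]
    linarith only [mul_pos h3 h2, hLH]
  have hbar1 : Δbar ≤ 2 * (1 - α) * εg / C1 := by rw [hΔbar]; exact min_le_left _ _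
  have hbar2 : Δbar ≤ 4 * (1 - α) * εH / C2 := by rw [hΔbar]; exact min_le_right _ _
  have hΔbarpos : 0 < Δbar := by
    rw [hΔbar]
    exact lt_min (div_pos (by linarith only [mul_pos h1α hεg]) hC1) (div_pos (by linarith only [mul_pos h1α hεH]) hC2)
  have hΔminpos : 0 < Δmin := by rw [hΔmin]; exact lt_min hΔ0pos (by linarith only [hΔbarpos])
  have hminD0 : Δmin ≤ Δ 0 := by rw [hΔmin]; exact min_le_left _ _
  have hminbar : Δmin ≤ Δbar / 2 := by rw [hΔmin]; exact min_le_right _ _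
  have hminC1 : Δmin * C1 ≤ (1 - α) * εg := by
    have he : 2 * (1 - α) * εg / C1 = 2 * ((1 - α) * εg / C1) := by ring
    have h : Δmin ≤ (1 - α) * εg / C1 := by
      refine hminbar.trans ?_
      rw [he] at hbar1
      linarith only [hbar1, hminbar]
    exact (le_div_iff₀ hC1).mp h
  have hminεg : 5 * Lg * Δmin ≤ εg := by
    have hge : 5 * Lg ≤ C1 := by
      rw [hC1def]; linarith only [mul_nonneg hu0 hLg.le, hLg]
    linarith only [mul_le_mul_of_nonneg_right hge hΔminpos.le, mul_pos hα0 hεg, hminC1]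
  set N : ℕ → Prop := fun j => (‖gradient f (x j)‖ ≤ εg ∧ -εH ≤ lambdaMin (hessian f (x j)))
    with hNdef
  set R : ℕ → ℝ := fun k => (f (x k) - f (x k + d k)) / (m k 0 - m k (d k)) with hRdef
  set μ : ℝ := min (εg * Δmin) (εH * Δmin ^ 2) with hμdef
  have hμpos : 0 < μ := lt_min (mul_pos hεg hΔminpos) (mul_pos hεH (by positivity))
  set δ : ℝ := 2 / 5 * μ with hδdef
  have hδpos : 0 < δ := mul_pos (by norm_num) hμpos
  have hm0 : ∀ k, m k 0 = f (x k) := by intro k; rw [hm]; simp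
  have step : ∀ k, (∀ j ≤ k, ¬ N j) → Δmin ≤ Δ k → Δ k ≤ Δmax →
      0 < m k 0 - m k (d k) ∧ δ ≤ m k 0 - m k (d k) ∧ (Δ k ≤ Δbar → α ≤ R k) := by
    intro k hP hlo hhi
    obtain ⟨h1, h2, h3, h4, h5, h6⟩ := hyp k hP
    have hΔk : 0 < Δ k := hΔpos k
    have hdnn : (0:ℝ) ≤ ‖d k‖ := norm_nonneg _
    set w : ℝ := Δ k / Δmax with hwdef
    have hw0 : 0 ≤ w := by rw [hwdef]; positivity
    have hw1 : w ≤ 1 := by rw [hwdef]; exact (div_le_one hΔmax).mpr hhi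
    have hμ1 : μ ≤ εg * Δmin := by rw [hμdef]; exact min_le_left _ _
    have hμ2 : μ ≤ εH * Δmin ^ 2 := by rw [hμdef]; exact min_le_right _ _
    have hδle : δ ≤ m k 0 - m k (d k) := by
      rcases h3 with hA | ⟨hB1, _⟩
      · have hmin : Δmin ≤ min (Δ k) (‖g k‖ / Lg) := by
          refine le_min hlo ?_
          rw [le_div_iff₀ hLg]
          linarith only [hminεg, hA, hεg]
        have h5' := le_trans (le_max_left _ _) h5
        have hgnn : (0:ℝ) ≤ 1/2 * ‖g k‖ := by positivity
        linarith only [hδdef, hμ1, h5', mul_le_mul_of_nonneg_left hmin hgnn,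
          mul_le_mul_of_nonneg_right hA.le hΔminpos.le]
      · have h5' := le_trans (le_max_right _ _) h5
        have hsq : Δmin ^ 2 ≤ Δ k ^ 2 := pow_le_pow_left₀ hΔminpos.le hlo 2
        linarith only [hδdef, hμ2, h5', hεH,
          mul_le_mul_of_nonneg_left hsq (by positivity : (0:ℝ) ≤ 4 * εH / 5),
          mul_le_mul_of_nonneg_right hB1.le (sq_nonneg (Δ k)),
          mul_nonneg hεH.le (sq_nonneg Δmin)]
    have hdecpos : 0 < m k 0 - m k (d k) := lt_of_lt_of_le hδpos hδle
    refine ⟨hdecpos, hδle, ?_⟩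
    intro hΔb
    -- common bounds
    have hDw : D0 / Δmax * Δ k = D0 * w := by rw [hwdef]; ring
    have einner : ⟪gradient f (x k) - g k, d k⟫ ≤ 2 * Lg * D0 * w ^ 2 * Δ k := by
      calc ⟪gradient f (x k) - g k, d k⟫ ≤ ‖gradient f (x k) - g k‖ * ‖d k‖ :=
            real_inner_le_norm _ _
        _ ≤ (2 * Lg * D0 * w ^ 2) * Δ k := by
            rw [norm_sub_rev]
            refine mul_le_mul h1 h4 hdnn ?_
            have h20 : (0:ℝ) ≤ 2 * Lg * D0 := mul_nonneg (mul_nonneg (by norm_num) hLg.le) hD0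
            positivity
        _ = 2 * Lg * D0 * w ^ 2 * Δ k := by ring
    have hmd : m k (d k) = f (x k) + ⟪g k, d k⟫
        + 1 / 2 * ⟪(Matrix.toEuclideanCLM (𝕜 := ℝ) (B k)) (d k), d k⟫ := hm k (d k)
    have hsuffices : f (x k + d k) - m k (d k) ≤ (1 - α) * (m k 0 - m k (d k)) → α ≤ R k := by
      intro herr
      have hnum : α * (m k 0 - m k (d k)) ≤ f (x k) - f (x k + d k) := by
        have h0 := hm0 k
        linarith only [herr, h0]
      rw [hRdef]
      exact (le_div_iff₀ hdecpos).mpr hnum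
    apply hsuffices
    have hsub : ⟪gradient f (x k) - g k, d k⟫
        = ⟪gradient f (x k), d k⟫ - ⟪g k, d k⟫ := inner_sub_left _ _ _
    have hd2 : ‖d k‖ ^ 2 ≤ Δ k ^ 2 := pow_le_pow_left₀ hdnn h4 2
    rcases h3 with hA | ⟨hB1, hB2⟩
    · -- gradient case
      have hkC1 : Δ k * C1 ≤ 2 * (1 - α) * εg := (le_div_iff₀ hC1).mp (hΔb.trans hbar1)
      have hgLg : Δ k ≤ ‖g k‖ / Lg := by
        rw [le_div_iff₀ hLg]
        have hge : 5 * Lg ≤ C1 := by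
          rw [hC1def]; linarith only [mul_nonneg hu0 hLg.le, hLg]
        linarith only [hkC1, mul_le_mul_of_nonneg_right hge hΔk.le, mul_pos hα0 hεg, hA, hεg]
      have hdec : 2 * εg / 5 * Δ k ≤ m k 0 - m k (d k) := by
        have h5' := le_trans (le_max_left _ _) h5
        rw [min_eq_left hgLg] at h5'
        linarith only [h5', mul_le_mul_of_nonneg_right hA.le hΔk.le]
      have tay := taylor1 f hf Lg hlipg (x k) (d k)
      have habs := inner_CLM_le (B k) (d k) (d k)
      have hs0 : (0:ℝ) ≤ specNorm (B k) := by unfold specNorm; exact norm_nonneg _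
      have h2' : specNorm (B k) * ‖d k‖ * ‖d k‖ ≤ Lg * Δ k * Δ k :=
        mul_le_mul (mul_le_mul h2 h4 hdnn hLg.le) h4 hdnn (mul_nonneg hLg.le hΔk.le)
      have hBq : -⟪(Matrix.toEuclideanCLM (𝕜 := ℝ) (B k)) (d k), d k⟫ ≤ Lg * Δ k ^ 2 := by
        linarith only [neg_abs_le ⟪(Matrix.toEuclideanCLM (𝕜 := ℝ) (B k)) (d k), d k⟫, habs, h2']
      have hdhalf : Lg / 2 * ‖d k‖ ^ 2 ≤ Lg / 2 * Δ k ^ 2 :=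
        mul_le_mul_of_nonneg_left hd2 (by linarith only [hLg])
      have herrA : f (x k + d k) - m k (d k)
          ≤ 2 * Lg * D0 * (w ^ 2 * Δ k) + Lg * Δ k ^ 2 := by
        rw [hmd]
        linarith only [tay, einner, hsub, hBq, hdhalf]
      have id1 : Δ k * (Δ k * C1) = 5 * Lg * Δ k ^ 2 + 10 * Lg * (D0 * (w * Δ k)) := by
        rw [hC1def, hwdef]; field_simp; ring
      have hw2 : w ^ 2 * Δ k ≤ w * Δ k := by
        have h1w : (0:ℝ) ≤ 1 - w := by linarith only [hw1]
        linarith only [mul_nonneg (mul_nonneg hw0 h1w) hΔk.le]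
      have key1 : 2 * Lg * D0 * (w ^ 2 * Δ k) ≤ 2 * Lg * D0 * (w * Δ k) :=
        mul_le_mul_of_nonneg_left hw2 (mul_nonneg (mul_nonneg (by norm_num) hLg.le) hD0)
      have key2 : Δ k * (Δ k * C1) ≤ Δ k * (2 * (1 - α) * εg) :=
        mul_le_mul_of_nonneg_left hkC1 hΔk.le
      have key3 : (1 - α) * (2 * εg / 5 * Δ k) ≤ (1 - α) * (m k 0 - m k (d k)) :=
        mul_le_mul_of_nonneg_left hdec h1α.le
      linarith only [herrA, key1, key2, key3, id1]
    · -- hessian case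
      have hkC2 : Δ k * C2 ≤ 4 * (1 - α) * εH := (le_div_iff₀ hC2).mp (hΔb.trans hbar2)
      have hdecB : 4 * εH / 5 * Δ k ^ 2 ≤ m k 0 - m k (d k) := by
        have h5' := le_trans (le_max_right _ _) h5
        linarith only [h5', mul_le_mul_of_nonneg_right hB1.le (sq_nonneg (Δ k))]
      have tay2 := taylor2 f hf LH hlipH (x k) (d k)
      have hmsub : ⟪(Matrix.toEuclideanCLM (𝕜 := ℝ) (hessian f (x k))) (d k), d k⟫
          - ⟪(Matrix.toEuclideanCLM (𝕜 := ℝ) (B k)) (d k), d k⟫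
          = ⟪(Matrix.toEuclideanCLM (𝕜 := ℝ) (hessian f (x k) - B k)) (d k), d k⟫ := by
        rw [map_sub, ContinuousLinearMap.sub_apply, inner_sub_left]
      have hspec : specNorm (hessian f (x k) - B k) = specNorm (B k - hessian f (x k)) := by
        unfold specNorm
        rw [show hessian f (x k) - B k = -(B k - hessian f (x k)) from (neg_sub _ _).symm,
          map_neg, norm_neg]
      have hHB : ⟪(Matrix.toEuclideanCLM (𝕜 := ℝ) (hessian f (x k))) (d k), d k⟫
          - ⟪(Matrix.toEuclideanCLM (𝕜 := ℝ) (B k)) (d k), d k⟫ ≤ 2 * Lg * w * Δ k ^ 2 := by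
        rw [hmsub]
        have habs2 := inner_CLM_le (hessian f (x k) - B k) (d k) (d k)
        have hw' : specNorm (hessian f (x k) - B k) ≤ 2 * Lg * w := by rw [hspec]; exact hB2
        have h2w : (0:ℝ) ≤ 2 * Lg * w := by
          linarith only [mul_nonneg hLg.le hw0]
        have hch : specNorm (hessian f (x k) - B k) * ‖d k‖ * ‖d k‖
            ≤ 2 * Lg * w * Δ k * Δ k :=
          mul_le_mul (mul_le_mul hw' h4 hdnn h2w) h4 hdnn (mul_nonneg h2w hΔk.le)
        linarith only [le_abs_self ⟪(Matrix.toEuclideanCLM (𝕜 := ℝ)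
          (hessian f (x k) - B k)) (d k), d k⟫, habs2, hch]
      have hd3 : ‖d k‖ ^ 3 ≤ Δ k ^ 3 := pow_le_pow_left₀ hdnn h4 3
      have hd3' : LH / 6 * ‖d k‖ ^ 3 ≤ LH / 6 * Δ k ^ 3 :=
        mul_le_mul_of_nonneg_left hd3 (by linarith only [hLH])
      have herrB : f (x k + d k) - m k (d k)
          ≤ 2 * Lg * D0 * (w ^ 2 * Δ k) + Lg * (w * Δ k ^ 2) + LH / 6 * Δ k ^ 3 := by
        rw [hmd]
        linarith only [tay2, einner, hsub, hHB, hd3']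
      have id2 : Δ k ^ 2 * (Δ k * C2)
          = 5 * (LH / 6) * Δ k ^ 3 + 10 * Lg * D0 * (w ^ 2 * Δ k) + 10 * Lg * (w * Δ k ^ 2) := by
        rw [hC2def, hwdef]; field_simp; ring
      have key2B : Δ k ^ 2 * (Δ k * C2) ≤ Δ k ^ 2 * (4 * (1 - α) * εH) :=
        mul_le_mul_of_nonneg_left hkC2 (sq_nonneg _)
      have key3B : (1 - α) * (4 * εH / 5 * Δ k ^ 2) ≤ (1 - α) * (m k 0 - m k (d k)) :=
        mul_le_mul_of_nonneg_left hdecB h1α.le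
      have hslack : (0:ℝ) ≤ Lg * (w * Δ k ^ 2) :=
        mul_nonneg hLg.le (mul_nonneg hw0 (sq_nonneg _))
      linarith only [herrB, key2B, key3B, id2, hslack]
  have hscle : ∀ k : ℕ, ((Finset.range k).filter (fun j => α ≤ R j)).card ≤ k := by
    intro k
    calc ((Finset.range k).filter (fun j => α ≤ R j)).card
        ≤ (Finset.range k).card := Finset.card_filter_le _ _
      _ = k := Finset.card_range k
  set sc : ℕ → ℕ := fun k => ((Finset.range k).filter (fun j => α ≤ R j)).card with hscdef
  have hsc_succ : ∀ k, sc (k + 1) = if α ≤ R k then sc k + 1 else sc k := by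
    intro k
    rw [hscdef]
    simp only [Finset.range_add_one, Finset.filter_insert]
    by_cases h : α ≤ R k
    · rw [if_pos h, if_pos h, Finset.card_insert_of_notMem]
      intro hc
      exact absurd (Finset.mem_filter.mp hc).1 (by simp)
    · rw [if_neg h, if_neg h]
  have master : ∀ k : ℕ, (∀ j, j < k → ¬ N j) →
      (Δmin ≤ Δ k ∧ Δ k ≤ Δmax) ∧
      f (x k) ≤ f (x 0) - α * δ * (sc k) ∧
      Δ k * 2 ^ (k - sc k) ≤ Δ 0 * 2 ^ (sc k) := by
    intro k
    induction k with
    | zero =>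
      intro _
      refine ⟨⟨hminD0, hΔ0max⟩, ?_, ?_⟩
      · simp [hscdef]
      · simp [hscdef]
    | succ k ih =>
      intro hPk
      have hPk' : ∀ j, j ≤ k → ¬ N j := fun j hj => hPk j (Nat.lt_succ_of_le hj)
      have hPkk : ∀ j, j < k → ¬ N j := fun j hj => hPk j (hj.trans (Nat.lt_succ_self k))
      obtain ⟨⟨hlo, hhi⟩, hfk, hΔk2⟩ := ih hPkk
      obtain ⟨hdecpos, hδle, hsucc⟩ := step k hPk' hlo hhi
      obtain ⟨_, _, _, _, _, h6⟩ := hyp k hPk'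
      have hsck : sc k ≤ k := hscle k
      have hpow1 : (0:ℝ) < 2 ^ (k - sc k) := by positivity
      rcases le_or_gt α (R k) with hge | hlt
      · obtain ⟨hxeq, hΔeq⟩ := h6.1 hge
        have hscs : sc (k + 1) = sc k + 1 := by rw [hsc_succ k, if_pos hge]
        have hsub : k + 1 - sc (k + 1) = k - sc k := by rw [hscs]; omega
        have hnum : α * (m k 0 - m k (d k)) ≤ f (x k) - f (x k + d k) := by
          have h' : α ≤ (f (x k) - f (x k + d k)) / (m k 0 - m k (d k)) := hge
          exact (le_div_iff₀ hdecpos).mp h'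
        refine ⟨?_, ?_, ?_⟩
        · rw [hΔeq]
          constructor
          · refine le_min ?_ ?_
            · linarith only [hlo, hΔpos k]
            · linarith only [hlo, hhi]
          · exact min_le_right _ _
        · rw [hxeq, hscs]
          push_cast
          have hδdec : α * δ ≤ α * (m k 0 - m k (d k)) :=
            mul_le_mul_of_nonneg_left hδle hα0.le
          linarith only [hnum, hfk, hδdec]
        · rw [hΔeq, hsub, hscs, pow_succ]
          have h1 : min (2 * Δ k) Δmax ≤ 2 * Δ k := min_le_left _ _
          have h2 : min (2 * Δ k) Δmax * 2 ^ (k - sc k) ≤ 2 * Δ k * 2 ^ (k - sc k) :=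
            mul_le_mul_of_nonneg_right h1 hpow1.le
          nlinarith only [h2, hΔk2]
      · obtain ⟨hxeq, hΔeq⟩ := h6.2 hlt
        have hscs : sc (k + 1) = sc k := by rw [hsc_succ k, if_neg (not_le.mpr hlt)]
        have hsub : k + 1 - sc (k + 1) = (k - sc k) + 1 := by rw [hscs]; omega
        have hbig : Δbar < Δ k := by
          by_contra hle
          push_neg at hle
          exact absurd (hsucc hle) (not_le.mpr hlt)
        refine ⟨?_, ?_, ?_⟩
        · rw [hΔeq]
          constructor
          · linarith only [hbig, hminbar]
          · linarith only [hhi, hΔpos k]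
        · rw [hxeq, hscs]; exact hfk
        · rw [hΔeq, hsub, hscs, pow_succ]
          nlinarith only [hΔk2, hpow1]
  -- Nonemptiness
  have hne : {k : ℕ | N k}.Nonempty := by
    by_contra hempty
    have hall : ∀ k, ¬ N k := fun k hk => hempty ⟨k, hk⟩
    have hP : ∀ k, ∀ j, j < k → ¬ N j := fun k j _ => hall j
    have hsbound : ∀ k, (sc k : ℝ) ≤ (f (x 0) - flow) / (α * δ) := by
      intro k
      obtain ⟨_, hfk, _⟩ := master k (hP k)
      have hfl := hlow (x k)
      rw [le_div_iff₀ (mul_pos hα0 hδpos)]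
      nlinarith only [hfk, hfl, mul_pos hα0 hδpos]
    set NN : ℕ := ⌈(f (x 0) - flow) / (α * δ)⌉₊ with hNNdef
    have hscNN : ∀ k, sc k ≤ NN := by
      intro k
      have h := (hsbound k).trans (Nat.le_ceil ((f (x 0) - flow) / (α * δ)))
      exact_mod_cast h
    obtain ⟨M, hM⟩ := pow_unbounded_of_one_lt (R := ℝ) (Δ 0 * 2 ^ NN / Δmin) one_lt_two
    have hk := master (NN + M) (hP (NN + M))
    obtain ⟨⟨hlo, _⟩, _, hΔb⟩ := hk
    have h1 : Δmin * 2 ^ (NN + M - sc (NN + M)) ≤ Δ 0 * 2 ^ (sc (NN + M)) := by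
      refine le_trans ?_ hΔb
      exact mul_le_mul_of_nonneg_right hlo (by positivity)
    have h2 : (2:ℝ) ^ (sc (NN + M)) ≤ 2 ^ NN :=
      pow_le_pow_right₀ one_le_two (hscNN (NN + M))
    have h3 : (2:ℝ) ^ M ≤ 2 ^ (NN + M - sc (NN + M)) := by
      apply pow_le_pow_right₀ one_le_two
      have := hscNN (NN + M)
      omega
    have h4 : Δ 0 * 2 ^ NN < Δmin * 2 ^ M := by
      rw [div_lt_iff₀ hΔminpos] at hM
      linarith only [hM]
    have h5 : Δmin * 2 ^ M ≤ Δmin * 2 ^ (NN + M - sc (NN + M)) :=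
      mul_le_mul_of_nonneg_left h3 hΔminpos.le
    have h6 : Δ 0 * 2 ^ (sc (NN + M)) ≤ Δ 0 * 2 ^ NN :=
      mul_le_mul_of_nonneg_left h2 hΔ0pos.le
    linarith only [h1, h4, h5, h6]
  refine ⟨hne, ?_⟩
  -- The complexity bound
  set T : ℕ := sInf {k : ℕ | N k} with hTdef
  have hPT : ∀ j, j < T → ¬ N j := by
    intro j hj hN
    exact absurd (Nat.sInf_le hN) (not_le.mpr hj)
  obtain ⟨⟨hTlo, _⟩, hfT, hΔT⟩ := master T hPT
  have hsk : sc T ≤ T := hscle T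
  have hflT := hlow (x T)
  have hsreal : α * δ * (sc T : ℝ) ≤ f (x 0) - flow := by linarith only [hfT, hflT]
  have h2pow : Δmin * 2 ^ (T - sc T) ≤ Δmax * 2 ^ (sc T) := by
    have ha : Δmin * 2 ^ (T - sc T) ≤ Δ T * 2 ^ (T - sc T) :=
      mul_le_mul_of_nonneg_right hTlo (by positivity)
    have hb : Δ 0 * 2 ^ (sc T) ≤ Δmax * 2 ^ (sc T) :=
      mul_le_mul_of_nonneg_right hΔ0max (by positivity)
    linarith only [ha, hb, hΔT]
  have hlog : ((T - sc T : ℕ) : ℝ) ≤ Real.logb 2 (Δmax / Δmin) + (sc T : ℝ) := by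
    have hpos1 : (0:ℝ) < 2 ^ (T - sc T) := by positivity
    have harg : (2:ℝ) ^ (T - sc T) ≤ (Δmax / Δmin) * 2 ^ (sc T) := by
      rw [div_mul_eq_mul_div, le_div_iff₀ hΔminpos]
      calc (2:ℝ) ^ (T - sc T) * Δmin = Δmin * 2 ^ (T - sc T) := by ring
        _ ≤ Δmax * 2 ^ (sc T) := h2pow
    have hlb := Real.logb_le_logb_of_le (b := 2) one_lt_two hpos1 harg
    rw [Real.logb_mul (ne_of_gt (div_pos hΔmax hΔminpos)) (by positivity),
      Real.logb_pow, Real.logb_pow] at hlb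
    have h22 : Real.logb 2 2 = 1 := Real.logb_self_eq_one (by norm_num)
    rw [h22] at hlb
    linarith only [hlb]
  have hTsplit : (T : ℝ) = (sc T : ℝ) + ((T - sc T : ℕ) : ℝ) := by
    have h := Nat.add_sub_cancel' hsk
    calc (T : ℝ) = ((sc T + (T - sc T) : ℕ) : ℝ) := by rw [h]
      _ = (sc T : ℝ) + ((T - sc T : ℕ) : ℝ) := by push_cast; ring
  have hmaxeq : max (εg⁻¹ * Δmin⁻¹) (εH⁻¹ * (Δmin ^ 2)⁻¹) = μ⁻¹ := by
    have hinv1 : εg⁻¹ * Δmin⁻¹ = (εg * Δmin)⁻¹ := (mul_inv εg Δmin).symm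
    have hinv2 : εH⁻¹ * (Δmin ^ 2)⁻¹ = (εH * Δmin ^ 2)⁻¹ := (mul_inv εH (Δmin ^ 2)).symm
    rw [hinv1, hinv2, hμdef]
    rcases le_total (εg * Δmin) (εH * Δmin ^ 2) with h | h
    · rw [min_eq_left h, max_eq_left]
      exact inv_anti₀ (mul_pos hεg hΔminpos) h
    · rw [min_eq_right h, max_eq_right]
      exact inv_anti₀ (mul_pos hεH (by positivity)) h
  have h2s : 2 * (sc T : ℝ) ≤ 5 / α * (f (x 0) - flow) * μ⁻¹ := by
    have hid : 2 * (sc T : ℝ) = 5 / α * (α * δ * (sc T : ℝ)) * μ⁻¹ := by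
      rw [hδdef]
      field_simp
    rw [hid]
    refine mul_le_mul_of_nonneg_right (mul_le_mul_of_nonneg_left hsreal ?_) ?_
    · exact le_of_lt (div_pos (by norm_num) hα0)
    · exact inv_nonneg.mpr hμpos.le
  rw [hmaxeq]
  have hfinal : (T : ℝ) ≤ 5 / α * (f (x 0) - flow) * μ⁻¹ + Real.logb 2 (Δmax / Δmin) + 1 := by
    linarith only [hTsplit, hlog, h2s]
  calc ((sInf {k : ℕ | N k} : ℕ) : ℝ) = (T : ℝ) := by rw [hTdef]
    _ ≤ 5 / α * (f (x 0) - flow) * μ⁻¹ + Real.logb 2 (Δmax / Δmin) + 1 := hfinal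
    _ = (5 / α) * (f (x 0) - flow) * μ⁻¹ + Real.logb 2 (Δmax / Δmin) + 1 := by ring
end
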